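/- Functional extensionality for values (may): let τ, σ be closed types and f, g ∈ Val(τ→σ) closed values such that for all u ∈ Val(τ), f u ≅↓ctx g u : σ. Then f ≅↓ctx g : τ→σ. -/

import Mathlib

set_option maxHeartbeats 1000000

namespace CountChoice

/-! ## Syntax: types and terms (de Bruijn indices) -/

/-- Types: type variables, unit, products, functions, recursive sum types
`μα.(τ₁+…+τₙ)` (the `μ` binds one type variable, common to all summands),
and universal types `∀α.τ`. -/
inductive Ty : Type where
  | var : ℕ → Ty
  | unit : Ty
  | prod : Ty → Ty → Ty
  | arrow : Ty → Ty → Ty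
  | mu : (m : ℕ) → (Fin m → Ty) → Ty
  | all : Ty → Ty

/-- Lifting a renaming under a binder. -/
def liftR (f : ℕ → ℕ) : ℕ → ℕ
  | 0 => 0
  | i + 1 => f i + 1

def Ty.rename (f : ℕ → ℕ) : Ty → Ty
  | .var i => .var (f i)
  | .unit => .unit
  | .prod a b => .prod (a.rename f) (b.rename f)
  | .arrow a b => .arrow (a.rename f) (b.rename f)
  | .mu m ts => .mu m (fun j => (ts j).rename (liftR f))
  | .all a => .all (a.rename (liftR f))

/-- Lifting a type substitution under a type binder. -/
def liftS (σ : ℕ → Ty) : ℕ → Ty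
  | 0 => .var 0
  | i + 1 => (σ i).rename Nat.succ

def Ty.subst (σ : ℕ → Ty) : Ty → Ty
  | .var i => σ i
  | .unit => .unit
  | .prod a b => .prod (a.subst σ) (b.subst σ)
  | .arrow a b => .arrow (a.subst σ) (b.subst σ)
  | .mu m ts => .mu m (fun j => (ts j).subst (liftS σ))
  | .all a => .all (a.subst (liftS σ))

/-- Extending a type substitution (cons). -/
def consTy (τ : Ty) (σ : ℕ → Ty) : ℕ → Ty
  | 0 => τ
  | i + 1 => σ i

/-- `Ty.subst1 σ τ` is `τ[σ/α]`, substitution of `σ` for the innermost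
type variable of `τ`. -/
def Ty.subst1 (σ : Ty) (τ : Ty) : Ty := τ.subst (consTy σ Ty.var)

/-- `Ty.Wf Δ τ`: all free type variables of `τ` are among the first `Δ`. -/
def Ty.Wf : ℕ → Ty → Prop
  | Δ, .var i => i < Δ
  | _, .unit => True
  | Δ, .prod a b => a.Wf Δ ∧ b.Wf Δ
  | Δ, .arrow a b => a.Wf Δ ∧ b.Wf Δ
  | Δ, .mu _ ts => ∀ j, (ts j).Wf (Δ + 1)
  | Δ, .all a => a.Wf (Δ + 1)

/-- Terms.  `case v m es` is `case v of (in₁ x₁.e₁ | … | inₘ xₘ.eₘ)`;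
`choice` is the countable choice `?`; `proj false`/`proj true` are the two
projections; `tapp v τ` is type application `v τ`; `tlam` is `Λα.e`. -/
inductive Tm : Type where
  | var : ℕ → Tm
  | unit : Tm
  | pair : Tm → Tm → Tm
  | lam : Tm → Tm
  | inj : ℕ → Tm → Tm
  | tlam : Tm → Tm
  | choice : Tm
  | proj : Bool → Tm → Tm
  | app : Tm → Tm → Tm
  | case : Tm → (m : ℕ) → (Fin m → Tm) → Tm
  | tapp : Tm → Ty → Tm

/-- Values. -/
inductive IsVal : Tm → Prop where
  | var : ∀ {x}, IsVal (.var x)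
  | unit : IsVal .unit
  | pair : ∀ {v₁ v₂}, IsVal v₁ → IsVal v₂ → IsVal (.pair v₁ v₂)
  | lam : ∀ {e}, IsVal (.lam e)
  | inj : ∀ {j v}, IsVal v → IsVal (.inj j v)
  | tlam : ∀ {e}, IsVal (.tlam e)

/-- Renaming of term variables. -/
def Tm.rename (f : ℕ → ℕ) : Tm → Tm
  | .var i => .var (f i)
  | .unit => .unit
  | .pair a b => .pair (a.rename f) (b.rename f)
  | .lam e => .lam (e.rename (liftR f))
  | .inj j v => .inj j (v.rename f)
  | .tlam e => .tlam (e.rename f)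
  | .choice => .choice
  | .proj b v => .proj b (v.rename f)
  | .app a b => .app (a.rename f) (b.rename f)
  | .case v m es => .case (v.rename f) m (fun j => (es j).rename (liftR f))
  | .tapp v τ => .tapp (v.rename f) τ

/-- Renaming of type variables inside a term. -/
def Tm.tyRename (f : ℕ → ℕ) : Tm → Tm
  | .var i => .var i
  | .unit => .unit
  | .pair a b => .pair (a.tyRename f) (b.tyRename f)
  | .lam e => .lam (e.tyRename f)
  | .inj j v => .inj j (v.tyRename f)
  | .tlam e => .tlam (e.tyRename (liftR f))
  | .choice => .choice
  | .proj b v => .proj b (v.tyRename f)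
  | .app a b => .app (a.tyRename f) (b.tyRename f)
  | .case v m es => .case (v.tyRename f) m (fun j => (es j).tyRename f)
  | .tapp v τ => .tapp (v.tyRename f) (τ.rename f)

/-- Lifting a term substitution under a term binder. -/
def liftT (σ : ℕ → Tm) : ℕ → Tm
  | 0 => .var 0
  | i + 1 => (σ i).rename Nat.succ

/-- Substitution of terms for term variables. -/
def Tm.subst (σ : ℕ → Tm) : Tm → Tm
  | .var i => σ i
  | .unit => .unit
  | .pair a b => .pair (a.subst σ) (b.subst σ)
  | .lam e => .lam (e.subst (liftT σ))
  | .inj j v => .inj j (v.subst σ)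
  | .tlam e => .tlam (e.subst (fun i => (σ i).tyRename Nat.succ))
  | .choice => .choice
  | .proj b v => .proj b (v.subst σ)
  | .app a b => .app (a.subst σ) (b.subst σ)
  | .case v m es => .case (v.subst σ) m (fun j => (es j).subst (liftT σ))
  | .tapp v τ => .tapp (v.subst σ) τ

/-- Substitution of types for type variables inside a term. -/
def Tm.tySubst (σ : ℕ → Ty) : Tm → Tm
  | .var i => .var i
  | .unit => .unit
  | .pair a b => .pair (a.tySubst σ) (b.tySubst σ)
  | .lam e => .lam (e.tySubst σ)
  | .inj j v => .inj j (v.tySubst σ)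
  | .tlam e => .tlam (e.tySubst (liftS σ))
  | .choice => .choice
  | .proj b v => .proj b (v.tySubst σ)
  | .app a b => .app (a.tySubst σ) (b.tySubst σ)
  | .case v m es => .case (v.tySubst σ) m (fun j => (es j).tySubst σ)
  | .tapp v τ => .tapp (v.tySubst σ) (τ.subst σ)

/-- Extending a term substitution (cons). -/
def consTm (v : Tm) (σ : ℕ → Tm) : ℕ → Tm
  | 0 => v
  | i + 1 => σ i

/-- `subst1 v e` is `e[v/x]` for the innermost term variable. -/
def subst1 (v : Tm) (e : Tm) : Tm := e.subst (consTm v Tm.var)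

/-- `tySubst1 σ e` is `e[σ/α]` for the innermost type variable. -/
def tySubst1 (σ : Ty) (e : Tm) : Tm := e.tySubst (consTy σ Ty.var)

/-- A term is closed if it is invariant under all term- and type-variable
substitutions. -/
def Tm.Closed (e : Tm) : Prop :=
  (∀ σ : ℕ → Tm, e.subst σ = e) ∧ (∀ σ : ℕ → Ty, e.tySubst σ = e)

/-! ## Numerals and the type of natural numbers -/

/-- `nat = μα.(1+α)`. -/
def natTy : Ty := .mu 2 ![.unit, .var 0]

/-- Numerals `n̲`. -/
def numeral : ℕ → Tm
  | 0 => .inj 0 .unit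
  | n + 1 => .inj 1 (numeral n)

/-! ## Operational semantics -/

/-- Labels classifying reduction steps.  `unfold` labels the unfold-fold
(case) reductions, `choice` labels the `? ↦ n̲` reductions. -/
inductive Lbl : Type where
  | beta | projred | tbeta | unfold | choice

/-- Labeled one-step reduction. -/
inductive Step : Tm → Lbl → Tm → Prop where
  | projFst : ∀ {v₁ v₂}, IsVal v₁ → IsVal v₂ →
      Step (.proj false (.pair v₁ v₂)) .projred v₁
  | projSnd : ∀ {v₁ v₂}, IsVal v₁ → IsVal v₂ →
      Step (.proj true (.pair v₁ v₂)) .projred v₂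
  | beta : ∀ {e v}, IsVal v → Step (.app (.lam e) v) .beta (subst1 v e)
  | tbeta : ∀ {e τ}, Step (.tapp (.tlam e) τ) .tbeta (tySubst1 τ e)
  | caseInj : ∀ {m : ℕ} {es : Fin m → Tm} {j : ℕ} {v} (h : j < m), IsVal v →
      Step (.case (.inj j v) m es) .unfold (subst1 v (es ⟨j, h⟩))
  | choice : ∀ n : ℕ, Step .choice .choice (numeral n)
  | appArg : ∀ {v e l e'}, IsVal v → Step e l e' → Step (.app v e) l (.app v e')

/-- One-step reduction `e ↦ e'`. -/
def Red (e e' : Tm) : Prop := ∃ l, Step e l e'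

/-- `StepsU e n e'`: `e ↦* e'` with exactly `n` unfold-fold reductions in
the sequence. -/
inductive StepsU : Tm → ℕ → Tm → Prop where
  | refl : ∀ {e}, StepsU e 0 e
  | unfold : ∀ {e e₁ n e₂}, Step e .unfold e₁ → StepsU e₁ n e₂ → StepsU e (n + 1) e₂
  | other : ∀ {e l e₁ n e₂}, l ≠ .unfold → Step e l e₁ → StepsU e₁ n e₂ → StepsU e n e₂

/-- May-convergence `e↓`. -/
def MayConv (e : Tm) : Prop := ∃ n v, StepsU e n v ∧ IsVal v

/-- `e↓ₙ`: `e` reduces to a value with at most `n` unfold-fold reductions. -/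
def MayConvN (e : Tm) (n : ℕ) : Prop := ∃ m ≤ n, ∃ v, StepsU e m v ∧ IsVal v

/-- `e ⇝¹ e'`: `e ↦* e'` with exactly one unfold-fold reduction. -/
def UnfoldOne (e e' : Tm) : Prop := StepsU e 1 e'

/-- `e ⇝ᵖ e'`: `e ↦* e'` with no choice reductions. -/
inductive PSteps : Tm → Tm → Prop where
  | refl : ∀ {e}, PSteps e e
  | step : ∀ {e l e₁ e₂}, l ≠ .choice → Step e l e₁ → PSteps e₁ e₂ → PSteps e e₂

/-- `e ⇝ᵖ⁰ e'`: `e ↦* e'` with no choice reductions and no unfold-fold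
reductions. -/
inductive P0Steps : Tm → Tm → Prop where
  | refl : ∀ {e}, P0Steps e e
  | step : ∀ {e l e₁ e₂}, l ≠ .choice → l ≠ .unfold → Step e l e₁ →
      P0Steps e₁ e₂ → P0Steps e e₂

/-- Must-convergence `e⇓`: the least predicate closed under the rule
"if every one-step reduct of `e` must-converges then so does `e`". -/
inductive Must : Tm → Prop where
  | intro : ∀ {e}, (∀ e', Red e e' → Must e') → Must e

/-- The least uncountable ordinal `ω₁`. -/
noncomputable def omega1 : Ordinal.{0} := (Cardinal.aleph 1).ord

/-- The stratified predicate `e↯_β`, defined by ordinal induction: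
`e↯_β` iff every one-step reduct `e'` of `e` satisfies `e'↯_ν`
for some `ν < β`. -/
def Lightning (β : Ordinal.{0}) (e : Tm) : Prop :=
  ∀ e', Red e e' → ∃ ν : {ν : Ordinal.{0} // ν < β}, Lightning ν.1 e'
termination_by β
decreasing_by exact ν.2

/-- The stratified must-convergence predicate `e⇓_β`, defined by ordinal
induction: `e⇓_β` iff whenever `e ⇝¹ e'` there is `ν < β` with `e'⇓_ν`. -/
def MustStrat (β : Ordinal.{0}) (e : Tm) : Prop :=
  ∀ e', UnfoldOne e e' → ∃ ν : {ν : Ordinal.{0} // ν < β}, MustStrat ν.1 e'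
termination_by β
decreasing_by exact ν.2

/-! ## Typing -/

/-- `Δ ⊢ Γ`: all types in the context are well-formed in `Δ`. -/
def CtxWf (Δ : ℕ) (Γ : List Ty) : Prop := ∀ τ ∈ Γ, Ty.Wf Δ τ

/-- The typing judgement `Δ;Γ ⊢ e : τ` (`Δ` counts type variables, `Γ` is the
list of types of term variables, innermost first). -/
inductive HasTy : ℕ → List Ty → Tm → Ty → Prop where
  | var : ∀ {Δ Γ x τ}, CtxWf Δ Γ → Γ[x]? = some τ → HasTy Δ Γ (.var x) τ
  | unit : ∀ {Δ Γ}, CtxWf Δ Γ → HasTy Δ Γ .unit .unit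
  | pair : ∀ {Δ Γ v₁ v₂ τ₁ τ₂}, IsVal v₁ → IsVal v₂ →
      HasTy Δ Γ v₁ τ₁ → HasTy Δ Γ v₂ τ₂ → HasTy Δ Γ (.pair v₁ v₂) (.prod τ₁ τ₂)
  | lam : ∀ {Δ Γ e τ₁ τ₂}, Ty.Wf Δ τ₁ → HasTy Δ (τ₁ :: Γ) e τ₂ →
      HasTy Δ Γ (.lam e) (.arrow τ₁ τ₂)
  | inj : ∀ {Δ Γ v} {m : ℕ} {ts : Fin m → Ty} {j : ℕ} (h : j < m), IsVal v →
      Ty.Wf Δ (.mu m ts) →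
      HasTy Δ Γ v (Ty.subst1 (.mu m ts) (ts ⟨j, h⟩)) →
      HasTy Δ Γ (.inj j v) (.mu m ts)
  | tlam : ∀ {Δ Γ e τ}, HasTy (Δ + 1) (Γ.map (Ty.rename Nat.succ)) e τ →
      HasTy Δ Γ (.tlam e) (.all τ)
  | proj : ∀ {Δ Γ v τ₁ τ₂} (b : Bool), IsVal v → HasTy Δ Γ v (.prod τ₁ τ₂) →
      HasTy Δ Γ (.proj b v) (bif b then τ₂ else τ₁)
  | app : ∀ {Δ Γ v e τ₁ τ₂}, IsVal v → HasTy Δ Γ v (.arrow τ₁ τ₂) →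
      HasTy Δ Γ e τ₁ → HasTy Δ Γ (.app v e) τ₂
  | case : ∀ {Δ Γ v τ'} {m : ℕ} {ts : Fin m → Ty} {es : Fin m → Tm}, IsVal v →
      HasTy Δ Γ v (.mu m ts) →
      (∀ j : Fin m, HasTy Δ (Ty.subst1 (.mu m ts) (ts j) :: Γ) (es j) τ') →
      HasTy Δ Γ (.case v m es) τ'
  | tapp : ∀ {Δ Γ v τ σ}, IsVal v → HasTy Δ Γ v (.all τ) → Ty.Wf Δ σ →
      HasTy Δ Γ (.tapp v σ) (Ty.subst1 σ τ)
  | choice : ∀ {Δ Γ}, CtxWf Δ Γ → HasTy Δ Γ .choice natTy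

/-! ## Evaluation contexts -/

/-- Evaluation contexts `E ::= [] | v E` are represented as lists of the
applied values, outermost first. -/
def plug (E : List Tm) (e : Tm) : Tm := E.foldr .app e

/-- Typing of evaluation contexts, `⊢ E : τ ⊸ τ'`. -/
inductive ECtxTy : List Tm → Ty → Ty → Prop where
  | nil : ∀ {τ}, Ty.Wf 0 τ → ECtxTy [] τ τ
  | cons : ∀ {v E τ₁ τ τ₂}, IsVal v → HasTy 0 [] v (.arrow τ τ₂) →
      ECtxTy E τ₁ τ → ECtxTy (v :: E) τ₁ τ₂

/-! ## CIU preorders -/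

/-- A closing type substitution `δ ∈ Type^Δ`. -/
def TySubstOK (Δ : ℕ) (δ : ℕ → Ty) : Prop := ∀ i < Δ, Ty.Wf 0 (δ i)

/-- A type-respecting closing value substitution `γ ∈ Subst(Γ)`. -/
def SubstOK (Γ : List Ty) (γ : ℕ → Tm) : Prop :=
  ∀ i τ, Γ[i]? = some τ → IsVal (γ i) ∧ HasTy 0 [] (γ i) τ

/-- The may-CIU preorder `Δ;Γ ⊢ e ≾↓ciu e' : τ`. -/
def CiuMay (Δ : ℕ) (Γ : List Ty) (e e' : Tm) (τ : Ty) : Prop :=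
  HasTy Δ Γ e τ ∧ HasTy Δ Γ e' τ ∧
  ∀ δ, TySubstOK Δ δ → ∀ γ, SubstOK (Γ.map (Ty.subst δ)) γ →
  ∀ E τ', ECtxTy E (τ.subst δ) τ' →
  MayConv (plug E ((e.tySubst δ).subst γ)) → MayConv (plug E ((e'.tySubst δ).subst γ))

/-- The must-CIU preorder `Δ;Γ ⊢ e ≾⇓ciu e' : τ`. -/
def CiuMust (Δ : ℕ) (Γ : List Ty) (e e' : Tm) (τ : Ty) : Prop :=
  HasTy Δ Γ e τ ∧ HasTy Δ Γ e' τ ∧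
  ∀ δ, TySubstOK Δ δ → ∀ γ, SubstOK (Γ.map (Ty.subst δ)) γ →
  ∀ E τ', ECtxTy E (τ.subst δ) τ' →
  Must (plug E ((e.tySubst δ).subst γ)) → Must (plug E ((e'.tySubst δ).subst γ))

/-! ## Type-indexed relations, precongruences and contextual approximation -/

/-- A type-indexed relation. -/
def TIRel : Type := ℕ → List Ty → Tm → Tm → Ty → Prop

/-- A type-indexed relation relates only well-typed terms. -/
def WellTypedRel (R : TIRel) : Prop :=
  ∀ Δ Γ e e' τ, R Δ Γ e e' τ → HasTy Δ Γ e τ ∧ HasTy Δ Γ e' τ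

def ReflRel (R : TIRel) : Prop := ∀ Δ Γ e τ, HasTy Δ Γ e τ → R Δ Γ e e τ

def TransRel (R : TIRel) : Prop :=
  ∀ Δ Γ e₁ e₂ e₃ τ, R Δ Γ e₁ e₂ τ → R Δ Γ e₂ e₃ τ → R Δ Γ e₁ e₃ τ

/-- The compatibility rules (one for each term former). -/
structure Compatible (R : TIRel) : Prop where
  var : ∀ {Δ Γ x τ}, CtxWf Δ Γ → Γ[x]? = some τ → R Δ Γ (.var x) (.var x) τ
  unit : ∀ {Δ Γ}, CtxWf Δ Γ → R Δ Γ .unit .unit .unit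
  pair : ∀ {Δ Γ v₁ v₂ v₁' v₂' τ₁ τ₂}, IsVal v₁ → IsVal v₂ → IsVal v₁' → IsVal v₂' →
      R Δ Γ v₁ v₁' τ₁ → R Δ Γ v₂ v₂' τ₂ →
      R Δ Γ (.pair v₁ v₂) (.pair v₁' v₂') (.prod τ₁ τ₂)
  lam : ∀ {Δ Γ e e' τ₁ τ₂}, Ty.Wf Δ τ₁ → R Δ (τ₁ :: Γ) e e' τ₂ →
      R Δ Γ (.lam e) (.lam e') (.arrow τ₁ τ₂)
  inj : ∀ {Δ Γ v v'} {m : ℕ} {ts : Fin m → Ty} {j : ℕ} (h : j < m),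
      IsVal v → IsVal v' → Ty.Wf Δ (.mu m ts) →
      R Δ Γ v v' (Ty.subst1 (.mu m ts) (ts ⟨j, h⟩)) →
      R Δ Γ (.inj j v) (.inj j v') (.mu m ts)
  tlam : ∀ {Δ Γ e e' τ}, R (Δ + 1) (Γ.map (Ty.rename Nat.succ)) e e' τ →
      R Δ Γ (.tlam e) (.tlam e') (.all τ)
  proj : ∀ {Δ Γ v v' τ₁ τ₂} (b : Bool), IsVal v → IsVal v' →
      R Δ Γ v v' (.prod τ₁ τ₂) →
      R Δ Γ (.proj b v) (.proj b v') (bif b then τ₂ else τ₁)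
  app : ∀ {Δ Γ v v' e e' τ₁ τ₂}, IsVal v → IsVal v' →
      R Δ Γ v v' (.arrow τ₁ τ₂) → R Δ Γ e e' τ₁ →
      R Δ Γ (.app v e) (.app v' e') τ₂
  case : ∀ {Δ Γ v v' τ'} {m : ℕ} {ts : Fin m → Ty} {es es' : Fin m → Tm},
      IsVal v → IsVal v' → R Δ Γ v v' (.mu m ts) →
      (∀ j : Fin m, R Δ (Ty.subst1 (.mu m ts) (ts j) :: Γ) (es j) (es' j) τ') →
      R Δ Γ (.case v m es) (.case v' m es') τ'
  tapp : ∀ {Δ Γ v v' τ σ}, IsVal v → IsVal v' → R Δ Γ v v' (.all τ) →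
      Ty.Wf Δ σ → R Δ Γ (.tapp v σ) (.tapp v' σ) (Ty.subst1 σ τ)
  choice : ∀ {Δ Γ}, CtxWf Δ Γ → R Δ Γ .choice .choice natTy

/-- May-adequacy. -/
def MayAdequate (R : TIRel) : Prop :=
  ∀ e e' τ, R 0 [] e e' τ → MayConv e → MayConv e'

/-- Must-adequacy. -/
def MustAdequate (R : TIRel) : Prop :=
  ∀ e e' τ, R 0 [] e e' τ → Must e → Must e'

/-- May-contextual approximation `Δ;Γ ⊢ e ≾↓ctx e' : τ`: the largest
may-adequate precongruence. -/
def CtxMay (Δ : ℕ) (Γ : List Ty) (e e' : Tm) (τ : Ty) : Prop :=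
  ∃ R : TIRel, WellTypedRel R ∧ ReflRel R ∧ TransRel R ∧ Compatible R ∧
    MayAdequate R ∧ R Δ Γ e e' τ

/-- Must-contextual approximation `Δ;Γ ⊢ e ≾⇓ctx e' : τ`: the largest
must-adequate precongruence. -/
def CtxMust (Δ : ℕ) (Γ : List Ty) (e e' : Tm) (τ : Ty) : Prop :=
  ∃ R : TIRel, WellTypedRel R ∧ ReflRel R ∧ TransRel R ∧ Compatible R ∧
    MustAdequate R ∧ R Δ Γ e e' τ

/-- May-contextual equivalence `≅↓ctx`. -/
def CtxMayEq (Δ : ℕ) (Γ : List Ty) (e e' : Tm) (τ : Ty) : Prop :=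
  CtxMay Δ Γ e e' τ ∧ CtxMay Δ Γ e' e τ

/-- Must-contextual equivalence `≅⇓ctx`. -/
def CtxMustEq (Δ : ℕ) (Γ : List Ty) (e e' : Tm) (τ : Ty) : Prop :=
  CtxMust Δ Γ e e' τ ∧ CtxMust Δ Γ e' e τ

/-- Contextual equivalence `≅ctx` (intersection of may and must). -/
def CtxEq (Δ : ℕ) (Γ : List Ty) (e e' : Tm) (τ : Ty) : Prop :=
  CtxMayEq Δ Γ e e' τ ∧ CtxMustEq Δ Γ e e' τ

end CountChoice

namespace CountChoice

/-! ## Step-indexed uniform value relations and the may logical relation -/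

/-- Step-indexed relations on terms (indexed over `ω`). -/
def SIRel : Type := ℕ → Tm → Tm → Prop

/-- Extending a relational environment (cons). -/
def consRel (r : SIRel) (ρ : ℕ → SIRel) : ℕ → SIRel
  | 0 => r
  | i + 1 => ρ i

/-- `r ∈ VRel_ω(σ,σ')`: an `ω`-indexed uniform relation on `Val(σ) × Val(σ')`:
it relates only closed values of the given types, its 0-th component is all of
`Val(σ) × Val(σ')`, and it is decreasing in the index. -/
def IsVRel (σ σ' : Ty) (r : SIRel) : Prop :=
  (∀ n v v', r n v v' → (IsVal v ∧ HasTy 0 [] v σ) ∧ (IsVal v' ∧ HasTy 0 [] v' σ')) ∧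
  (∀ v v', IsVal v → HasTy 0 [] v σ → IsVal v' → HasTy 0 [] v' σ' → r 0 v v') ∧
  (∀ n v v', r (n + 1) v v' → r n v v')

/-- The lift `r⊤` of a step-indexed relation to evaluation contexts
(for may-convergence). -/
def sTopMay (r : SIRel) (n : ℕ) (E E' : List Tm) : Prop :=
  ∀ j ≤ n, ∀ v v', r j v v' → MayConvN (plug E v) j → MayConv (plug E' v')

/-- The biorthogonal lift `r⊤⊤` of a step-indexed relation to terms
(for may-convergence). -/
def ttopMay (r : SIRel) : SIRel := fun n e e' =>
  ∀ j ≤ n, ∀ E E', sTopMay r j E E' → MayConvN (plug E e) j → MayConv (plug E' e')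

/-- The may logical relation `⟦τ⟧(r⃗)`, given closing type substitutions
`δ, δ'` and a relational environment `ρ` with `ρ i ∈ VRel_ω(δ i, δ' i)`;
it is an `ω`-indexed uniform relation on `Val(τδ) × Val(τδ')`.
Recursive types are interpreted by the unique (guarded) fixed point
`fix s.⋃ⱼ inⱼ(▷⟦τⱼ⟧(r⃗,s))`, where `(▷R)ₙ = ⋂_{k<n} Rₖ`. -/
def interpMay : Ty → (ℕ → Ty) → (ℕ → Ty) → (ℕ → SIRel) → SIRel
  | .var i, _, _, ρ => ρ i
  | .unit, _, _, _ => fun _ v v' => v = .unit ∧ v' = .unit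
  | .prod τ₁ τ₂, δ, δ', ρ => fun n v v' =>
      ∃ v₁ v₂ v₁' v₂', v = .pair v₁ v₂ ∧ v' = .pair v₁' v₂' ∧
        interpMay τ₁ δ δ' ρ n v₁ v₁' ∧ interpMay τ₂ δ δ' ρ n v₂ v₂'
  | .arrow τ₁ τ₂, δ, δ', ρ => fun n v v' =>
      ∃ e e', v = .lam e ∧ v' = .lam e' ∧
        HasTy 0 [] v ((Ty.arrow τ₁ τ₂).subst δ) ∧
        HasTy 0 [] v' ((Ty.arrow τ₁ τ₂).subst δ') ∧
        ∀ m ≤ n, ∀ u u', interpMay τ₁ δ δ' ρ m u u' →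
          ttopMay (interpMay τ₂ δ δ' ρ) m (subst1 u e) (subst1 u' e')
  | .all τ, δ, δ', ρ => fun n v v' =>
      ∃ e e', v = .tlam e ∧ v' = .tlam e' ∧
        HasTy 0 [] v ((Ty.all τ).subst δ) ∧
        HasTy 0 [] v' ((Ty.all τ).subst δ') ∧
        ∀ σ σ', Ty.Wf 0 σ → Ty.Wf 0 σ' → ∀ r : SIRel, IsVRel σ σ' r →
          ttopMay (interpMay τ (consTy σ δ) (consTy σ' δ') (consRel r ρ)) n
            (tySubst1 σ e) (tySubst1 σ' e')
  | .mu m ts, δ, δ', ρ => fun n =>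
      Nat.strongRecOn (motive := fun _ => Tm → Tm → Prop) n
        (fun n ih v v' =>
          ∃ j, ∃ h : j < m, ∃ u u',
            v = .inj j u ∧ v' = .inj j u' ∧ IsVal u ∧ IsVal u' ∧
            HasTy 0 [] u (Ty.subst (consTy ((Ty.mu m ts).subst δ) δ) (ts ⟨j, h⟩)) ∧
            HasTy 0 [] u' (Ty.subst (consTy ((Ty.mu m ts).subst δ') δ') (ts ⟨j, h⟩)) ∧
            ∀ k, k < n →
              interpMay (ts ⟨j, h⟩)
                (consTy ((Ty.mu m ts).subst δ) δ)
                (consTy ((Ty.mu m ts).subst δ') δ')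
                (consRel (fun i u₁ u₂ => ∃ hi : i < n, ih i hi u₁ u₂) ρ) k u u')

/-- Pointwise relatedness of value substitutions, `(γ,γ') ∈ ⟦Γ⟧(r⃗)ₙ`. -/
def EnvRelMay (Γ : List Ty) (δ δ' : ℕ → Ty) (ρ : ℕ → SIRel) (n : ℕ)
    (γ γ' : ℕ → Tm) : Prop :=
  ∀ i τ, Γ[i]? = some τ → interpMay τ δ δ' ρ n (γ i) (γ' i)

/-- Logical may-approximation `Δ;Γ ⊢ e ≾↓log e' : τ`. -/
def LogMay (Δ : ℕ) (Γ : List Ty) (e e' : Tm) (τ : Ty) : Prop :=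
  HasTy Δ Γ e τ ∧ HasTy Δ Γ e' τ ∧
  ∀ δ δ', TySubstOK Δ δ → TySubstOK Δ δ' →
  ∀ ρ : ℕ → SIRel, (∀ i < Δ, IsVRel (δ i) (δ' i) (ρ i)) →
  ∀ n γ γ', EnvRelMay Γ δ δ' ρ n γ γ' →
  ttopMay (interpMay τ δ δ' ρ) n ((e.tySubst δ).subst γ) ((e'.tySubst δ').subst γ')

end CountChoice

namespace CountChoice

/-! ## Ordinal-indexed uniform value relations and the must logical relation -/

/-- Ordinal-indexed relations on terms. -/
def OSIRel : Type 1 := Ordinal.{0} → Tm → Tm → Prop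

/-- Extending an ordinal-indexed relational environment (cons). -/
def consORel (r : OSIRel) (ρ : ℕ → OSIRel) : ℕ → OSIRel
  | 0 => r
  | i + 1 => ρ i

/-- `r ∈ VRel_ω₁(σ,σ')`: an ordinal-indexed uniform relation on
`Val(σ) × Val(σ')`: it relates only closed values of the given types, its
0-th component is all of `Val(σ) × Val(σ')`, it is decreasing at successors
and it is the intersection of the earlier components at limits. -/
def IsOVRel (σ σ' : Ty) (r : OSIRel) : Prop :=
  (∀ β v v', r β v v' → (IsVal v ∧ HasTy 0 [] v σ) ∧ (IsVal v' ∧ HasTy 0 [] v' σ')) ∧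
  (∀ v v', IsVal v → HasTy 0 [] v σ → IsVal v' → HasTy 0 [] v' σ' → r 0 v v') ∧
  (∀ β v v', r (β + 1) v v' → r β v v') ∧
  (∀ β, Order.IsSuccLimit β → ∀ v v', (r β v v' ↔ ∀ ν < β, r ν v v'))

/-- The lift `r⊤` of an ordinal-indexed relation to evaluation contexts
(for must-convergence). -/
def sTopMust (r : OSIRel) (β : Ordinal.{0}) (E E' : List Tm) : Prop :=
  ∀ ν ≤ β, ∀ v v', r ν v v' → MustStrat ν (plug E v) → Must (plug E' v')

/-- The biorthogonal lift `r⊤⊤` of an ordinal-indexed relation to terms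
(for must-convergence). -/
def ttopMust (r : OSIRel) : OSIRel := fun β e e' =>
  ∀ ν ≤ β, ∀ E E', sTopMust r ν E E' → MustStrat ν (plug E e) → Must (plug E' e')

/-- The must logical relation `⟦τ⟧(r⃗)`, an ordinal-indexed uniform relation,
defined exactly as the may logical relation but with the must-biorthogonal
lifts. -/
def interpMust : Ty → (ℕ → Ty) → (ℕ → Ty) → (ℕ → OSIRel) → OSIRel
  | .var i, _, _, ρ => ρ i
  | .unit, _, _, _ => fun _ v v' => v = .unit ∧ v' = .unit
  | .prod τ₁ τ₂, δ, δ', ρ => fun β v v' =>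
      ∃ v₁ v₂ v₁' v₂', v = .pair v₁ v₂ ∧ v' = .pair v₁' v₂' ∧
        interpMust τ₁ δ δ' ρ β v₁ v₁' ∧ interpMust τ₂ δ δ' ρ β v₂ v₂'
  | .arrow τ₁ τ₂, δ, δ', ρ => fun β v v' =>
      ∃ e e', v = .lam e ∧ v' = .lam e' ∧
        HasTy 0 [] v ((Ty.arrow τ₁ τ₂).subst δ) ∧
        HasTy 0 [] v' ((Ty.arrow τ₁ τ₂).subst δ') ∧
        ∀ ν ≤ β, ∀ u u', interpMust τ₁ δ δ' ρ ν u u' →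
          ttopMust (interpMust τ₂ δ δ' ρ) ν (subst1 u e) (subst1 u' e')
  | .all τ, δ, δ', ρ => fun β v v' =>
      ∃ e e', v = .tlam e ∧ v' = .tlam e' ∧
        HasTy 0 [] v ((Ty.all τ).subst δ) ∧
        HasTy 0 [] v' ((Ty.all τ).subst δ') ∧
        ∀ σ σ', Ty.Wf 0 σ → Ty.Wf 0 σ' → ∀ r : OSIRel, IsOVRel σ σ' r →
          ttopMust (interpMust τ (consTy σ δ) (consTy σ' δ') (consORel r ρ)) β
            (tySubst1 σ e) (tySubst1 σ' e')
  | .mu m ts, δ, δ', ρ => fun β =>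
      (wellFounded_lt (α := Ordinal.{0})).fix
        (C := fun _ => Tm → Tm → Prop)
        (fun β ih v v' =>
          ∃ j, ∃ h : j < m, ∃ u u',
            v = .inj j u ∧ v' = .inj j u' ∧ IsVal u ∧ IsVal u' ∧
            HasTy 0 [] u (Ty.subst (consTy ((Ty.mu m ts).subst δ) δ) (ts ⟨j, h⟩)) ∧
            HasTy 0 [] u' (Ty.subst (consTy ((Ty.mu m ts).subst δ') δ') (ts ⟨j, h⟩)) ∧
            ∀ ν, ν < β →
              interpMust (ts ⟨j, h⟩)
                (consTy ((Ty.mu m ts).subst δ) δ)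
                (consTy ((Ty.mu m ts).subst δ') δ')
                (consORel (fun i u₁ u₂ => ∃ hi : i < β, ih i hi u₁ u₂) ρ) ν u u')
        β

/-- Pointwise relatedness of value substitutions, `(γ,γ') ∈ ⟦Γ⟧(r⃗)_β`. -/
def EnvRelMust (Γ : List Ty) (δ δ' : ℕ → Ty) (ρ : ℕ → OSIRel) (β : Ordinal.{0})
    (γ γ' : ℕ → Tm) : Prop :=
  ∀ i τ, Γ[i]? = some τ → interpMust τ δ δ' ρ β (γ i) (γ' i)

/-- Logical must-approximation `Δ;Γ ⊢ e ≾⇓log e' : τ`. -/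
def LogMust (Δ : ℕ) (Γ : List Ty) (e e' : Tm) (τ : Ty) : Prop :=
  HasTy Δ Γ e τ ∧ HasTy Δ Γ e' τ ∧
  ∀ δ δ', TySubstOK Δ δ → TySubstOK Δ δ' →
  ∀ ρ : ℕ → OSIRel, (∀ i < Δ, IsOVRel (δ i) (δ' i) (ρ i)) →
  ∀ β < omega1, ∀ γ γ', EnvRelMust Γ δ δ' ρ β γ γ' →
  ttopMust (interpMust τ δ δ' ρ) β ((e.tySubst δ).subst γ) ((e'.tySubst δ').subst γ')

end CountChoice

namespace CountChoice

/-! ## Derived terms -/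

/-- `let x = e₁ in e₂`, i.e. `(λx.e₂) e₁`. -/
def letIn (e₁ e₂ : Tm) : Tm := .app (.lam e₂) e₁

/-- The term `δ_f = λy.case y of (in y'. f(λx.let r = y' y in r x))`,
where `f` is the term variable of de Bruijn index 0 outside. -/
def deltaTm : Tm :=
  .lam (.case (.var 0) 1
    ![.app (.var 2)
        (.lam (letIn (.app (.var 1) (.var 2)) (.app (.var 0) (.var 1))))])

/-- The fixed point combinator
`fix = Λα,β.λf.δ_f(in δ_f) : ∀α,β.((α→β)→(α→β))→(α→β)`. -/
def fixTm : Tm := .tlam (.tlam (.lam (.app deltaTm (.inj 0 deltaTm))))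

/-- `fix τ₁ τ₂ v`, i.e. `let x = fix τ₁ in let y = x τ₂ in y v`. -/
def fixApp (τ₁ τ₂ : Ty) (v : Tm) : Tm :=
  letIn (.tapp fixTm τ₁)
    (letIn (.tapp (.var 0) τ₂) (.app (.var 0) (v.rename (· + 2))))

/-- The identity `id = λx.x`. -/
def idTm : Tm := .lam (.var 0)

/-- The divergent term `Ω = Λα.(fix 1 α)(λf.f)⟨⟩ : ∀α.α`. -/
def OmegaTm : Tm :=
  .tlam (letIn (fixApp .unit (.var 0) (.lam (.var 0))) (.app (.var 0) .unit))

/-- Erratic choice `e₁ or e₂`, i.e.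
`let x = ? in case x of (in₁ y.e₁ | in₂ y.e₂)`. -/
def orTm (e₁ e₂ : Tm) : Tm :=
  letIn .choice (.case (.var 0) 2 ![e₁.rename (· + 2), e₂.rename (· + 2)])

/-- Type application of a term: `w τ` abbreviates `let f = w in f τ`. -/
def letTapp (w : Tm) (τ : Ty) : Tm := letIn w (.tapp (.var 0) τ)

/-- `(λx.x t) w`: applies (the eventual value of) `w` to the closed term `t`. -/
def letAppArg (w t : Tm) : Tm := .app (.lam (.app (.var 0) t)) w

end CountChoice

namespace CountChoice

/-! ### Type substitution algebra -/

theorem liftR_comp (ρ ρ' : ℕ → ℕ) : liftR ρ' ∘ liftR ρ = liftR (ρ' ∘ ρ) := by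
  funext i; cases i <;> rfl

theorem Ty.rename_rename (t : Ty) (ρ ρ' : ℕ → ℕ) :
    (t.rename ρ).rename ρ' = t.rename (ρ' ∘ ρ) := by
  induction t generalizing ρ ρ' with
  | var i => rfl
  | unit => rfl
  | prod a b iha ihb => simp only [Ty.rename]; rw [iha, ihb]
  | arrow a b iha ihb => simp only [Ty.rename]; rw [iha, ihb]
  | mu m ts ih =>
      simp only [Ty.rename]; congr 1; funext j; rw [ih j, liftR_comp]
  | all a ih => simp only [Ty.rename]; rw [ih, liftR_comp]

theorem liftS_liftR (δ : ℕ → Ty) (ρ : ℕ → ℕ) :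
    (fun i => liftS δ (liftR ρ i)) = liftS (fun i => δ (ρ i)) := by
  funext i; cases i <;> rfl

theorem Ty.subst_rename (t : Ty) (ρ : ℕ → ℕ) (δ : ℕ → Ty) :
    (t.rename ρ).subst δ = t.subst (fun i => δ (ρ i)) := by
  induction t generalizing ρ δ with
  | var i => rfl
  | unit => rfl
  | prod a b iha ihb => simp only [Ty.rename, Ty.subst]; rw [iha, ihb]
  | arrow a b iha ihb => simp only [Ty.rename, Ty.subst]; rw [iha, ihb]
  | mu m ts ih =>
      simp only [Ty.rename, Ty.subst]; congr 1; funext j; rw [ih j, liftS_liftR]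
  | all a ih => simp only [Ty.rename, Ty.subst]; rw [ih, liftS_liftR]

theorem liftR_succ_comm (ρ : ℕ → ℕ) :
    (fun i => liftR ρ (i + 1)) = (fun i => ρ i + 1) := by
  funext i; rfl

theorem liftS_rename (δ : ℕ → Ty) (ρ : ℕ → ℕ) :
    (fun i => (liftS δ i).rename (liftR ρ)) = liftS (fun i => (δ i).rename ρ) := by
  funext i
  cases i with
  | zero => rfl
  | succ i =>
      show ((δ i).rename Nat.succ).rename (liftR ρ) = ((δ i).rename ρ).rename Nat.succ
      rw [Ty.rename_rename, Ty.rename_rename]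
      rfl

theorem Ty.rename_subst (t : Ty) (δ : ℕ → Ty) (ρ : ℕ → ℕ) :
    (t.subst δ).rename ρ = t.subst (fun i => (δ i).rename ρ) := by
  induction t generalizing δ ρ with
  | var i => rfl
  | unit => rfl
  | prod a b iha ihb => simp only [Ty.rename, Ty.subst]; rw [iha, ihb]
  | arrow a b iha ihb => simp only [Ty.rename, Ty.subst]; rw [iha, ihb]
  | mu m ts ih =>
      simp only [Ty.rename, Ty.subst]; congr 1; funext j; rw [ih j, liftS_rename]
  | all a ih => simp only [Ty.rename, Ty.subst]; rw [ih, liftS_rename]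

theorem liftS_subst (δ δ' : ℕ → Ty) :
    (fun i => (liftS δ i).subst (liftS δ')) = liftS (fun i => (δ i).subst δ') := by
  funext i
  cases i with
  | zero => rfl
  | succ i =>
      show ((δ i).rename Nat.succ).subst (liftS δ') = ((δ i).subst δ').rename Nat.succ
      rw [Ty.subst_rename, Ty.rename_subst]
      rfl

theorem Ty.subst_subst (t : Ty) (δ δ' : ℕ → Ty) :
    (t.subst δ).subst δ' = t.subst (fun i => (δ i).subst δ') := by
  induction t generalizing δ δ' with
  | var i => rfl
  | unit => rfl
  | prod a b iha ihb => simp only [Ty.subst]; rw [iha, ihb]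
  | arrow a b iha ihb => simp only [Ty.subst]; rw [iha, ihb]
  | mu m ts ih =>
      simp only [Ty.subst]; congr 1; funext j; rw [ih j, liftS_subst]
  | all a ih => simp only [Ty.subst]; rw [ih, liftS_subst]

theorem liftS_var : liftS Ty.var = Ty.var := by
  funext i; cases i <;> rfl

theorem Ty.subst_var (t : Ty) : t.subst Ty.var = t := by
  induction t with
  | var i => rfl
  | unit => rfl
  | prod a b iha ihb => simp only [Ty.subst]; rw [iha, ihb]
  | arrow a b iha ihb => simp only [Ty.subst]; rw [iha, ihb]
  | mu m ts ih => simp only [Ty.subst, liftS_var]; congr 1; funext j; rw [ih j]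
  | all a ih => simp only [Ty.subst, liftS_var]; rw [ih]

theorem liftR_lt {Δ Δ' : ℕ} {ρ : ℕ → ℕ} (hρ : ∀ i < Δ, ρ i < Δ') :
    ∀ i < Δ + 1, liftR ρ i < Δ' + 1 := by
  intro i hi
  cases i with
  | zero => exact Nat.succ_pos _
  | succ i => exact Nat.succ_lt_succ (hρ i (Nat.lt_of_succ_lt_succ hi))

theorem Ty.Wf.rename {t : Ty} {Δ : ℕ} (h : t.Wf Δ) {Δ' : ℕ} {ρ : ℕ → ℕ}
    (hρ : ∀ i < Δ, ρ i < Δ') : (t.rename ρ).Wf Δ' := by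
  induction t generalizing Δ Δ' ρ with
  | var i => exact hρ i h
  | unit => trivial
  | prod a b iha ihb => exact ⟨iha h.1 hρ, ihb h.2 hρ⟩
  | arrow a b iha ihb => exact ⟨iha h.1 hρ, ihb h.2 hρ⟩
  | mu m ts ih => exact fun j => ih j (h j) (liftR_lt hρ)
  | all a ih => exact ih h (liftR_lt hρ)

theorem liftS_wf {Δ Δ' : ℕ} {δ : ℕ → Ty} (hδ : ∀ i < Δ, (δ i).Wf Δ') :
    ∀ i < Δ + 1, (liftS δ i).Wf (Δ' + 1) := by
  intro i hi
  cases i with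
  | zero => exact Nat.succ_pos _
  | succ i =>
      exact (hδ i (Nat.lt_of_succ_lt_succ hi)).rename (fun k hk => Nat.succ_lt_succ hk)

theorem Ty.Wf.subst {t : Ty} {Δ : ℕ} (h : t.Wf Δ) {Δ' : ℕ} {δ : ℕ → Ty}
    (hδ : ∀ i < Δ, (δ i).Wf Δ') : (t.subst δ).Wf Δ' := by
  induction t generalizing Δ Δ' δ with
  | var i => exact hδ i h
  | unit => trivial
  | prod a b iha ihb => exact ⟨iha h.1 hδ, ihb h.2 hδ⟩
  | arrow a b iha ihb => exact ⟨iha h.1 hδ, ihb h.2 hδ⟩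
  | mu m ts ih => exact fun j => ih j (h j) (liftS_wf hδ)
  | all a ih => exact ih h (liftS_wf hδ)

theorem Ty.Wf.mono {t : Ty} {Δ Δ' : ℕ} (h : t.Wf Δ) (hle : Δ ≤ Δ') : t.Wf Δ' := by
  induction t generalizing Δ Δ' with
  | var i => exact Nat.lt_of_lt_of_le h hle
  | unit => trivial
  | prod a b iha ihb => exact ⟨iha h.1 hle, ihb h.2 hle⟩
  | arrow a b iha ihb => exact ⟨iha h.1 hle, ihb h.2 hle⟩
  | mu m ts ih => exact fun j => ih j (h j) (Nat.succ_le_succ hle)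
  | all a ih => exact ih h (Nat.succ_le_succ hle)

theorem Ty.rename_eq_of_wf {t : Ty} {Δ : ℕ} (h : t.Wf Δ) {ρ : ℕ → ℕ}
    (hρ : ∀ i < Δ, ρ i = i) : t.rename ρ = t := by
  induction t generalizing Δ ρ with
  | var i => simp only [Ty.rename]; rw [hρ i h]
  | unit => rfl
  | prod a b iha ihb => simp only [Ty.rename]; rw [iha h.1 hρ, ihb h.2 hρ]
  | arrow a b iha ihb => simp only [Ty.rename]; rw [iha h.1 hρ, ihb h.2 hρ]
  | mu m ts ih =>
      simp only [Ty.rename]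
      congr 1; funext j
      refine ih j (h j) (fun i hi => ?_)
      cases i with
      | zero => rfl
      | succ i => show ρ i + 1 = i + 1; rw [hρ i (Nat.lt_of_succ_lt_succ hi)]
  | all a ih =>
      simp only [Ty.rename]
      refine congrArg _ (ih h (fun i hi => ?_))
      cases i with
      | zero => rfl
      | succ i => show ρ i + 1 = i + 1; rw [hρ i (Nat.lt_of_succ_lt_succ hi)]

theorem Ty.subst_eq_of_wf {t : Ty} {Δ : ℕ} (h : t.Wf Δ) {δ : ℕ → Ty}
    (hδ : ∀ i < Δ, δ i = .var i) : t.subst δ = t := by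
  induction t generalizing Δ δ with
  | var i => exact hδ i h
  | unit => rfl
  | prod a b iha ihb => simp only [Ty.subst]; rw [iha h.1 hδ, ihb h.2 hδ]
  | arrow a b iha ihb => simp only [Ty.subst]; rw [iha h.1 hδ, ihb h.2 hδ]
  | mu m ts ih =>
      simp only [Ty.subst]
      congr 1; funext j
      refine ih j (h j) (fun i hi => ?_)
      cases i with
      | zero => rfl
      | succ i =>
          show (δ i).rename Nat.succ = .var (i + 1)
          rw [hδ i (Nat.lt_of_succ_lt_succ hi)]; rfl
  | all a ih =>
      simp only [Ty.subst]
      refine congrArg _ (ih h (fun i hi => ?_))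
      cases i with
      | zero => rfl
      | succ i =>
          show (δ i).rename Nat.succ = .var (i + 1)
          rw [hδ i (Nat.lt_of_succ_lt_succ hi)]; rfl

theorem Ty.rename_eq_of_wf0 {t : Ty} (h : t.Wf 0) (ρ : ℕ → ℕ) : t.rename ρ = t :=
  Ty.rename_eq_of_wf h (fun i hi => absurd hi (Nat.not_lt_zero i))

theorem Ty.subst_eq_of_wf0 {t : Ty} (h : t.Wf 0) (δ : ℕ → Ty) : t.subst δ = t :=
  Ty.subst_eq_of_wf h (fun i hi => absurd hi (Nat.not_lt_zero i))

theorem Ty.subst1_rename (M t : Ty) (ρ : ℕ → ℕ) :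
    (Ty.subst1 M t).rename ρ = Ty.subst1 (M.rename ρ) (t.rename (liftR ρ)) := by
  unfold Ty.subst1
  rw [Ty.rename_subst, Ty.subst_rename]
  congr 1; funext i
  cases i <;> rfl

theorem Ty.subst1_subst (M t : Ty) (δ : ℕ → Ty) :
    (Ty.subst1 M t).subst δ = Ty.subst1 (M.subst δ) (t.subst (liftS δ)) := by
  unfold Ty.subst1
  rw [Ty.subst_subst, Ty.subst_subst]
  congr 1; funext i
  cases i with
  | zero => rfl
  | succ i =>
      show δ i = ((δ i).rename Nat.succ).subst (consTy (M.subst δ) Ty.var)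
      rw [Ty.subst_rename]
      exact (Ty.subst_var (δ i)).symm

end CountChoice

namespace CountChoice

/-! ### Values under renaming/substitution -/

theorem IsVal.rename {v : Tm} (h : IsVal v) (ρ : ℕ → ℕ) : IsVal (v.rename ρ) := by
  induction h generalizing ρ with
  | var => exact .var
  | unit => exact .unit
  | pair h1 h2 ih1 ih2 => exact .pair (ih1 ρ) (ih2 ρ)
  | lam => exact .lam
  | inj h ih => exact .inj (ih ρ)
  | tlam => exact .tlam

theorem IsVal.tyRename {v : Tm} (h : IsVal v) (ρ : ℕ → ℕ) : IsVal (v.tyRename ρ) := by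
  induction h generalizing ρ with
  | var => exact .var
  | unit => exact .unit
  | pair h1 h2 ih1 ih2 => exact .pair (ih1 ρ) (ih2 ρ)
  | lam => exact .lam
  | inj h ih => exact .inj (ih ρ)
  | tlam => exact .tlam

theorem IsVal.tySubst {v : Tm} (h : IsVal v) (δ : ℕ → Ty) : IsVal (v.tySubst δ) := by
  induction h generalizing δ with
  | var => exact .var
  | unit => exact .unit
  | pair h1 h2 ih1 ih2 => exact .pair (ih1 δ) (ih2 δ)
  | lam => exact .lam
  | inj h ih => exact .inj (ih δ)
  | tlam => exact .tlam

theorem IsVal.subst {v : Tm} (h : IsVal v) {γ : ℕ → Tm} (hγ : ∀ i, IsVal (γ i)) :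
    IsVal (v.subst γ) := by
  induction h generalizing γ with
  | var => exact hγ _
  | unit => exact .unit
  | pair h1 h2 ih1 ih2 => exact .pair (ih1 hγ) (ih2 hγ)
  | lam => exact .lam
  | inj h ih => exact .inj (ih hγ)
  | tlam => exact .tlam

theorem liftT_val {γ : ℕ → Tm} (hγ : ∀ i, IsVal (γ i)) : ∀ i, IsVal (liftT γ i) := by
  intro i
  cases i with
  | zero => exact .var
  | succ i => exact (hγ i).rename _

/-! ### Identity of renaming / substitution on well-typed terms -/

theorem getElem?_lt {Γ : List Ty} {x : ℕ} {A : Ty} (h : Γ[x]? = some A) :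
    x < Γ.length := by
  by_contra hx
  rw [List.getElem?_eq_none (Nat.le_of_not_lt hx)] at h
  cases h

theorem HasTy.rename_eq {Δ : ℕ} {Γ : List Ty} {e : Tm} {A : Ty}
    (h : HasTy Δ Γ e A) : ∀ ρ : ℕ → ℕ, (∀ i < Γ.length, ρ i = i) →
    e.rename ρ = e := by
  induction h with
  | var hΓ hx =>
      intro ρ hρ
      simp only [Tm.rename]
      rw [hρ _ (getElem?_lt hx)]
  | unit _ => intro ρ hρ; rfl
  | pair h1 h2 ht1 ht2 ih1 ih2 =>
      intro ρ hρ; simp only [Tm.rename]; rw [ih1 ρ hρ, ih2 ρ hρ]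
  | lam hw ht ih =>
      intro ρ hρ
      simp only [Tm.rename]
      rw [ih (liftR ρ) ?_]
      intro i hi
      cases i with
      | zero => rfl
      | succ i =>
          show ρ i + 1 = i + 1
          rw [hρ i (Nat.lt_of_succ_lt_succ hi)]
  | inj hj hv hw ht ih =>
      intro ρ hρ; simp only [Tm.rename]; rw [ih ρ hρ]
  | tlam ht ih =>
      intro ρ hρ
      simp only [Tm.rename]
      rw [ih ρ ?_]
      intro i hi
      exact hρ i (by simpa using hi)
  | proj b hv ht ih =>
      intro ρ hρ; simp only [Tm.rename]; rw [ih ρ hρ]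
  | app hv ht1 ht2 ih1 ih2 =>
      intro ρ hρ; simp only [Tm.rename]; rw [ih1 ρ hρ, ih2 ρ hρ]
  | case hv htv hts ihv ihs =>
      intro ρ hρ
      simp only [Tm.rename]
      rw [ihv ρ hρ]
      congr 1
      funext j
      rw [ihs j (liftR ρ) ?_]
      intro i hi
      cases i with
      | zero => rfl
      | succ i =>
          show ρ i + 1 = i + 1
          rw [hρ i (Nat.lt_of_succ_lt_succ hi)]
  | tapp hv ht hw ih =>
      intro ρ hρ; simp only [Tm.rename]; rw [ih ρ hρ]
  | choice _ => intro ρ hρ; rfl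

theorem HasTy.tyRename_eq {Δ : ℕ} {Γ : List Ty} {e : Tm} {A : Ty}
    (h : HasTy Δ Γ e A) : ∀ ρ : ℕ → ℕ, (∀ i < Δ, ρ i = i) →
    e.tyRename ρ = e := by
  induction h with
  | var hΓ hx => intro ρ hρ; rfl
  | unit _ => intro ρ hρ; rfl
  | pair h1 h2 ht1 ht2 ih1 ih2 =>
      intro ρ hρ; simp only [Tm.tyRename]; rw [ih1 ρ hρ, ih2 ρ hρ]
  | lam hw ht ih =>
      intro ρ hρ; simp only [Tm.tyRename]; rw [ih ρ hρ]
  | inj hj hv hw ht ih =>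
      intro ρ hρ; simp only [Tm.tyRename]; rw [ih ρ hρ]
  | tlam ht ih =>
      intro ρ hρ
      simp only [Tm.tyRename]
      rw [ih (liftR ρ) ?_]
      intro i hi
      cases i with
      | zero => rfl
      | succ i =>
          show ρ i + 1 = i + 1
          rw [hρ i (Nat.lt_of_succ_lt_succ hi)]
  | proj b hv ht ih =>
      intro ρ hρ; simp only [Tm.tyRename]; rw [ih ρ hρ]
  | app hv ht1 ht2 ih1 ih2 =>
      intro ρ hρ; simp only [Tm.tyRename]; rw [ih1 ρ hρ, ih2 ρ hρ]
  | case hv htv hts ihv ihs =>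
      intro ρ hρ
      simp only [Tm.tyRename]
      rw [ihv ρ hρ]
      congr 1
      funext j
      rw [ihs j ρ hρ]
  | tapp hv ht hw ih =>
      intro ρ hρ
      simp only [Tm.tyRename]
      rw [ih ρ hρ, Ty.rename_eq_of_wf hw hρ]
  | choice _ => intro ρ hρ; rfl

theorem HasTy.subst_eq {Δ : ℕ} {Γ : List Ty} {e : Tm} {A : Ty}
    (h : HasTy Δ Γ e A) : ∀ γ : ℕ → Tm, (∀ i < Γ.length, γ i = .var i) →
    e.subst γ = e := by
  induction h with
  | var hΓ hx => intro γ hγ; exact hγ _ (getElem?_lt hx)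
  | unit _ => intro γ hγ; rfl
  | pair h1 h2 ht1 ht2 ih1 ih2 =>
      intro γ hγ; simp only [Tm.subst]; rw [ih1 γ hγ, ih2 γ hγ]
  | lam hw ht ih =>
      intro γ hγ
      simp only [Tm.subst]
      rw [ih (liftT γ) ?_]
      intro i hi
      cases i with
      | zero => rfl
      | succ i =>
          show (γ i).rename Nat.succ = .var (i + 1)
          rw [hγ i (Nat.lt_of_succ_lt_succ hi)]; rfl
  | inj hj hv hw ht ih =>
      intro γ hγ; simp only [Tm.subst]; rw [ih γ hγ]
  | tlam ht ih =>
      intro γ hγ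
      simp only [Tm.subst]
      rw [ih (fun i => (γ i).tyRename Nat.succ) ?_]
      intro i hi
      show (γ i).tyRename Nat.succ = Tm.var i
      rw [hγ i (by simpa using hi)]; rfl
  | proj b hv ht ih =>
      intro γ hγ; simp only [Tm.subst]; rw [ih γ hγ]
  | app hv ht1 ht2 ih1 ih2 =>
      intro γ hγ; simp only [Tm.subst]; rw [ih1 γ hγ, ih2 γ hγ]
  | case hv htv hts ihv ihs =>
      intro γ hγ
      simp only [Tm.subst]
      rw [ihv γ hγ]
      congr 1
      funext j
      rw [ihs j (liftT γ) ?_]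
      intro i hi
      cases i with
      | zero => rfl
      | succ i =>
          show (γ i).rename Nat.succ = .var (i + 1)
          rw [hγ i (Nat.lt_of_succ_lt_succ hi)]; rfl
  | tapp hv ht hw ih =>
      intro γ hγ; simp only [Tm.subst]; rw [ih γ hγ]
  | choice _ => intro γ hγ; rfl

theorem HasTy.tySubst_eq {Δ : ℕ} {Γ : List Ty} {e : Tm} {A : Ty}
    (h : HasTy Δ Γ e A) : ∀ δ : ℕ → Ty, (∀ i < Δ, δ i = .var i) →
    e.tySubst δ = e := by
  induction h with
  | var hΓ hx => intro δ hδ; rfl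
  | unit _ => intro δ hδ; rfl
  | pair h1 h2 ht1 ht2 ih1 ih2 =>
      intro δ hδ; simp only [Tm.tySubst]; rw [ih1 δ hδ, ih2 δ hδ]
  | lam hw ht ih =>
      intro δ hδ; simp only [Tm.tySubst]; rw [ih δ hδ]
  | inj hj hv hw ht ih =>
      intro δ hδ; simp only [Tm.tySubst]; rw [ih δ hδ]
  | tlam ht ih =>
      intro δ hδ
      simp only [Tm.tySubst]
      rw [ih (liftS δ) ?_]
      intro i hi
      cases i with
      | zero => rfl
      | succ i =>
          show (δ i).rename Nat.succ = .var (i + 1)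
          rw [hδ i (Nat.lt_of_succ_lt_succ hi)]; rfl
  | proj b hv ht ih =>
      intro δ hδ; simp only [Tm.tySubst]; rw [ih δ hδ]
  | app hv ht1 ht2 ih1 ih2 =>
      intro δ hδ; simp only [Tm.tySubst]; rw [ih1 δ hδ, ih2 δ hδ]
  | case hv htv hts ihv ihs =>
      intro δ hδ
      simp only [Tm.tySubst]
      rw [ihv δ hδ]
      congr 1
      funext j
      rw [ihs j δ hδ]
  | tapp hv ht hw ih =>
      intro δ hδ
      simp only [Tm.tySubst]
      rw [ih δ hδ, Ty.subst_eq_of_wf hw hδ]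
  | choice _ => intro δ hδ; rfl

theorem Tm.rename_eq_closed {e : Tm} {A : Ty} (h : HasTy 0 [] e A) (ρ : ℕ → ℕ) :
    e.rename ρ = e :=
  h.rename_eq ρ (fun i hi => absurd hi (by simp))

theorem Tm.subst_eq_closed {e : Tm} {A : Ty} (h : HasTy 0 [] e A) (γ : ℕ → Tm) :
    e.subst γ = e :=
  h.subst_eq γ (fun i hi => absurd hi (by simp))

theorem Tm.tyRename_eq_closed {e : Tm} {A : Ty} (h : HasTy 0 [] e A) (ρ : ℕ → ℕ) :
    e.tyRename ρ = e :=
  h.tyRename_eq ρ (fun i hi => absurd hi (Nat.not_lt_zero i))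

theorem Tm.tySubst_eq_closed {e : Tm} {A : Ty} (h : HasTy 0 [] e A) (δ : ℕ → Ty) :
    e.tySubst δ = e :=
  h.tySubst_eq δ (fun i hi => absurd hi (Nat.not_lt_zero i))

/-! ### Context well-formedness from typing -/

theorem Ty.wf_rename_iff {t : Ty} : ∀ {Δ Δ' : ℕ} {ρ : ℕ → ℕ},
    (∀ i, i < Δ ↔ ρ i < Δ') → ((t.rename ρ).Wf Δ' ↔ t.Wf Δ) := by
  induction t with
  | var i => intro Δ Δ' ρ hρ; exact (hρ i).symm
  | unit => intro Δ Δ' ρ hρ; exact Iff.rfl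
  | prod a b iha ihb =>
      intro Δ Δ' ρ hρ; exact and_congr (iha hρ) (ihb hρ)
  | arrow a b iha ihb =>
      intro Δ Δ' ρ hρ; exact and_congr (iha hρ) (ihb hρ)
  | mu m ts ih =>
      intro Δ Δ' ρ hρ
      refine forall_congr' (fun j => ih j ?_)
      intro i
      cases i with
      | zero => simp [liftR]
      | succ i => simpa [liftR, Nat.succ_lt_succ_iff] using hρ i
  | all a ih =>
      intro Δ Δ' ρ hρ
      refine ih ?_
      intro i
      cases i with
      | zero => simp [liftR]
      | succ i => simpa [liftR, Nat.succ_lt_succ_iff] using hρ i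

theorem CtxWf.of_map_rename_succ {Δ : ℕ} {Γ : List Ty}
    (h : CtxWf (Δ + 1) (Γ.map (Ty.rename Nat.succ))) : CtxWf Δ Γ := by
  intro A hA
  have := h (A.rename Nat.succ) (List.mem_map_of_mem hA)
  exact (Ty.wf_rename_iff (fun i => by omega)).1 this

theorem CtxWf.of_cons {Δ : ℕ} {A : Ty} {Γ : List Ty} (h : CtxWf Δ (A :: Γ)) :
    CtxWf Δ Γ := fun B hB => h B (List.mem_cons_of_mem _ hB)

theorem HasTy.ctxWf {Δ : ℕ} {Γ : List Ty} {e : Tm} {A : Ty}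
    (h : HasTy Δ Γ e A) : CtxWf Δ Γ := by
  induction h with
  | var hΓ _ => exact hΓ
  | unit hΓ => exact hΓ
  | pair _ _ _ _ ih1 _ => exact ih1
  | lam _ _ ih => exact ih.of_cons
  | inj _ _ _ _ ih => exact ih
  | tlam _ ih => exact ih.of_map_rename_succ
  | proj _ _ _ ih => exact ih
  | app _ _ _ ih1 _ => exact ih1
  | case _ _ _ ihv _ => exact ihv
  | tapp _ _ _ ih => exact ih
  | choice hΓ => exact hΓ

/-! ### Weakening -/

theorem CtxWf.nil {Δ : ℕ} : CtxWf Δ [] := by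
  intro τ hτ; cases hτ

theorem CtxWf.cons {Δ : ℕ} {τ : Ty} {Γ : List Ty} (h : τ.Wf Δ) (hΓ : CtxWf Δ Γ) :
    CtxWf Δ (τ :: Γ) := by
  intro A hA
  rcases List.mem_cons.1 hA with rfl | hA
  · exact h
  · exact hΓ A hA

theorem CtxWf.map_rename_succ {Δ : ℕ} {Γ : List Ty} (hΓ : CtxWf Δ Γ) :
    CtxWf (Δ + 1) (Γ.map (Ty.rename Nat.succ)) := by
  intro A hA
  rcases List.mem_map.1 hA with ⟨B, hB, rfl⟩
  exact (hΓ B hB).rename (fun i hi => Nat.succ_lt_succ hi)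

theorem HasTy.weaken_gen {Δ : ℕ} {Γ : List Ty} {e : Tm} {A : Ty}
    (h : HasTy Δ Γ e A) : ∀ Δ' Γ'', Δ ≤ Δ' → CtxWf Δ' (Γ ++ Γ'') →
    HasTy Δ' (Γ ++ Γ'') e A := by
  induction h with
  | var hΓ hx =>
      intro Δ' Γ'' hle hwf
      exact HasTy.var hwf (by rw [List.getElem?_append_left (getElem?_lt hx)]; exact hx)
  | unit _ => intro Δ' Γ'' hle hwf; exact HasTy.unit hwf
  | pair h1 h2 ht1 ht2 ih1 ih2 =>
      intro Δ' Γ'' hle hwf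
      exact HasTy.pair h1 h2 (ih1 Δ' Γ'' hle hwf) (ih2 Δ' Γ'' hle hwf)
  | lam hw ht ih =>
      intro Δ' Γ'' hle hwf
      exact HasTy.lam (hw.mono hle) (ih Δ' Γ'' hle (CtxWf.cons (hw.mono hle) hwf))
  | inj hj hv hw ht ih =>
      intro Δ' Γ'' hle hwf
      exact HasTy.inj hj hv (hw.mono hle) (ih Δ' Γ'' hle hwf)
  | tlam ht ih =>
      intro Δ' Γ'' hle hwf
      refine HasTy.tlam ?_
      have := ih (Δ' + 1) (Γ''.map (Ty.rename Nat.succ)) (Nat.succ_le_succ hle) ?_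
      · rwa [← List.map_append] at this
      · rw [← List.map_append]
        exact hwf.map_rename_succ
  | proj b hv ht ih =>
      intro Δ' Γ'' hle hwf
      exact HasTy.proj b hv (ih Δ' Γ'' hle hwf)
  | app hv ht1 ht2 ih1 ih2 =>
      intro Δ' Γ'' hle hwf
      exact HasTy.app hv (ih1 Δ' Γ'' hle hwf) (ih2 Δ' Γ'' hle hwf)
  | case hv htv hts ihv ihs =>
      intro Δ' Γ'' hle hwf
      refine HasTy.case hv (ihv Δ' Γ'' hle hwf) (fun j => ?_)
      have hwfj := (((hts j).ctxWf _ (List.mem_cons_self)).mono hle)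
      exact ihs j Δ' Γ'' hle (CtxWf.cons hwfj hwf)
  | tapp hv ht hw ih =>
      intro Δ' Γ'' hle hwf
      exact HasTy.tapp hv (ih Δ' Γ'' hle hwf) (hw.mono hle)
  | choice _ => intro Δ' Γ'' hle hwf; exact HasTy.choice hwf

end CountChoice

namespace CountChoice

theorem HasTy.weaken {e : Tm} {A : Ty} (h : HasTy 0 [] e A) {Δ : ℕ} {Γ : List Ty}
    (hΓ : CtxWf Δ Γ) : HasTy Δ Γ e A := by
  have := h.weaken_gen Δ Γ (Nat.zero_le _) (by simpa using hΓ)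
  simpa using this

theorem natTy_wf (Δ : ℕ) : Ty.Wf Δ natTy := by
  intro j
  fin_cases j
  · trivial
  · exact Nat.succ_pos Δ

theorem numeral_isVal (n : ℕ) : IsVal (numeral n) := by
  induction n with
  | zero => exact .inj .unit
  | succ n ih => exact .inj ih

theorem numeral_hasTy (n : ℕ) {Δ : ℕ} {Γ : List Ty} (hΓ : CtxWf Δ Γ) :
    HasTy Δ Γ (numeral n) natTy := by
  induction n with
  | zero =>
      have hj : (0:ℕ) < 2 := by omega
      have h0 : HasTy Δ Γ Tm.unit
          ((Ty.mu 2 ![Ty.unit, Ty.var 0]).subst1 (![Ty.unit, Ty.var 0] ⟨0, hj⟩)) :=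
        HasTy.unit hΓ
      exact HasTy.inj hj .unit (natTy_wf Δ) h0
  | succ n ih =>
      have hj : (1:ℕ) < 2 := by omega
      have h1 : HasTy Δ Γ (numeral n)
          ((Ty.mu 2 ![Ty.unit, Ty.var 0]).subst1 (![Ty.unit, Ty.var 0] ⟨1, hj⟩)) := ih
      exact HasTy.inj hj (numeral_isVal n) (natTy_wf Δ) h1

/-! ### The congruence closure of a single pair of closed values -/

/-- The compatible closure of the pair `(f,g)` (in both orientations),
together with the typed diagonal. -/
inductive Rel (τ σ : Ty) (f g : Tm) : ℕ → List Ty → Tm → Tm → Ty → Prop where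
  | baseFG : ∀ {Δ Γ}, CtxWf Δ Γ → Rel τ σ f g Δ Γ f g (.arrow τ σ)
  | baseGF : ∀ {Δ Γ}, CtxWf Δ Γ → Rel τ σ f g Δ Γ g f (.arrow τ σ)
  | var : ∀ {Δ Γ x A}, CtxWf Δ Γ → Γ[x]? = some A → Rel τ σ f g Δ Γ (.var x) (.var x) A
  | unit : ∀ {Δ Γ}, CtxWf Δ Γ → Rel τ σ f g Δ Γ .unit .unit .unit
  | pair : ∀ {Δ Γ v₁ v₂ v₁' v₂' A₁ A₂}, IsVal v₁ → IsVal v₂ → IsVal v₁' → IsVal v₂' →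
      Rel τ σ f g Δ Γ v₁ v₁' A₁ → Rel τ σ f g Δ Γ v₂ v₂' A₂ →
      Rel τ σ f g Δ Γ (.pair v₁ v₂) (.pair v₁' v₂') (.prod A₁ A₂)
  | lam : ∀ {Δ Γ e e' A₁ A₂}, Ty.Wf Δ A₁ → Rel τ σ f g Δ (A₁ :: Γ) e e' A₂ →
      Rel τ σ f g Δ Γ (.lam e) (.lam e') (.arrow A₁ A₂)
  | inj : ∀ {Δ Γ v v'} {m : ℕ} {ts : Fin m → Ty} {j : ℕ} (hj : j < m),
      IsVal v → IsVal v' → Ty.Wf Δ (.mu m ts) →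
      Rel τ σ f g Δ Γ v v' (Ty.subst1 (.mu m ts) (ts ⟨j, hj⟩)) →
      Rel τ σ f g Δ Γ (.inj j v) (.inj j v') (.mu m ts)
  | tlam : ∀ {Δ Γ e e' A}, Rel τ σ f g (Δ + 1) (Γ.map (Ty.rename Nat.succ)) e e' A →
      Rel τ σ f g Δ Γ (.tlam e) (.tlam e') (.all A)
  | proj : ∀ {Δ Γ v v' A₁ A₂} (b : Bool), IsVal v → IsVal v' →
      Rel τ σ f g Δ Γ v v' (.prod A₁ A₂) →
      Rel τ σ f g Δ Γ (.proj b v) (.proj b v') (bif b then A₂ else A₁)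
  | app : ∀ {Δ Γ v v' e e' A₁ A₂}, IsVal v → IsVal v' →
      Rel τ σ f g Δ Γ v v' (.arrow A₁ A₂) → Rel τ σ f g Δ Γ e e' A₁ →
      Rel τ σ f g Δ Γ (.app v e) (.app v' e') A₂
  | case : ∀ {Δ Γ v v' A'} {m : ℕ} {ts : Fin m → Ty} {es es' : Fin m → Tm},
      IsVal v → IsVal v' → Rel τ σ f g Δ Γ v v' (.mu m ts) →
      (∀ j : Fin m, Rel τ σ f g Δ (Ty.subst1 (.mu m ts) (ts j) :: Γ) (es j) (es' j) A') →
      Rel τ σ f g Δ Γ (.case v m es) (.case v' m es') A'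
  | tapp : ∀ {Δ Γ v v' A B}, IsVal v → IsVal v' → Rel τ σ f g Δ Γ v v' (.all A) →
      Ty.Wf Δ B → Rel τ σ f g Δ Γ (.tapp v B) (.tapp v' B) (Ty.subst1 B A)
  | choice : ∀ {Δ Γ}, CtxWf Δ Γ → Rel τ σ f g Δ Γ .choice .choice natTy

section RelBasic

variable {τ σ : Ty} {f g : Tm}
variable (hτ : Ty.Wf 0 τ) (hσ : Ty.Wf 0 σ)
variable (hfv : IsVal f) (hgv : IsVal g)
variable (hfT : HasTy 0 [] f (.arrow τ σ)) (hgT : HasTy 0 [] g (.arrow τ σ))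

include hfT hgT in
theorem Rel.wt {Δ Γ a b A} (h : Rel τ σ f g Δ Γ a b A) :
    HasTy Δ Γ a A ∧ HasTy Δ Γ b A := by
  induction h with
  | baseFG hΓ => exact ⟨hfT.weaken hΓ, hgT.weaken hΓ⟩
  | baseGF hΓ => exact ⟨hgT.weaken hΓ, hfT.weaken hΓ⟩
  | var hΓ hx => exact ⟨HasTy.var hΓ hx, HasTy.var hΓ hx⟩
  | unit hΓ => exact ⟨HasTy.unit hΓ, HasTy.unit hΓ⟩
  | pair h1 h2 h1' h2' _ _ ih1 ih2 =>
      exact ⟨HasTy.pair h1 h2 ih1.1 ih2.1, HasTy.pair h1' h2' ih1.2 ih2.2⟩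
  | lam hw _ ih => exact ⟨HasTy.lam hw ih.1, HasTy.lam hw ih.2⟩
  | inj hj hv hv' hw _ ih => exact ⟨HasTy.inj hj hv hw ih.1, HasTy.inj hj hv' hw ih.2⟩
  | tlam _ ih => exact ⟨HasTy.tlam ih.1, HasTy.tlam ih.2⟩
  | proj b hv hv' _ ih => exact ⟨HasTy.proj b hv ih.1, HasTy.proj b hv' ih.2⟩
  | app hv hv' _ _ ih1 ih2 =>
      exact ⟨HasTy.app hv ih1.1 ih2.1, HasTy.app hv' ih1.2 ih2.2⟩
  | case hv hv' _ _ ihv ihs =>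
      exact ⟨HasTy.case hv ihv.1 (fun j => (ihs j).1),
             HasTy.case hv' ihv.2 (fun j => (ihs j).2)⟩
  | tapp hv hv' _ hw ih => exact ⟨HasTy.tapp hv ih.1 hw, HasTy.tapp hv' ih.2 hw⟩
  | choice hΓ => exact ⟨HasTy.choice hΓ, HasTy.choice hΓ⟩

theorem Rel.refl {Δ Γ a A} (h : HasTy Δ Γ a A) : Rel τ σ f g Δ Γ a a A := by
  induction h with
  | var hΓ hx => exact .var hΓ hx
  | unit hΓ => exact .unit hΓ
  | pair h1 h2 _ _ ih1 ih2 => exact .pair h1 h2 h1 h2 ih1 ih2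
  | lam hw _ ih => exact .lam hw ih
  | inj hj hv hw _ ih => exact .inj hj hv hv hw ih
  | tlam _ ih => exact .tlam ih
  | proj b hv _ ih => exact .proj b hv hv ih
  | app hv _ _ ih1 ih2 => exact .app hv hv ih1 ih2
  | case hv _ _ ihv ihs => exact .case hv hv ihv ihs
  | tapp hv _ hw ih => exact .tapp hv hv ih hw
  | choice hΓ => exact .choice hΓ

include hfv hgv in
theorem Rel.val {Δ Γ a b A} (h : Rel τ σ f g Δ Γ a b A) : IsVal a ↔ IsVal b := by
  induction h with
  | baseFG _ => exact iff_of_true hfv hgv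
  | baseGF _ => exact iff_of_true hgv hfv
  | var _ _ => exact iff_of_true .var .var
  | unit _ => exact iff_of_true .unit .unit
  | pair h1 h2 h1' h2' _ _ _ _ => exact iff_of_true (.pair h1 h2) (.pair h1' h2')
  | lam _ _ _ => exact iff_of_true .lam .lam
  | inj _ hv hv' _ _ _ => exact iff_of_true (.inj hv) (.inj hv')
  | tlam _ _ => exact iff_of_true .tlam .tlam
  | proj _ _ _ _ _ => exact iff_of_false (fun h => nomatch h) (fun h => nomatch h)
  | app _ _ _ _ _ _ => exact iff_of_false (fun h => nomatch h) (fun h => nomatch h)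
  | case _ _ _ _ _ _ => exact iff_of_false (fun h => nomatch h) (fun h => nomatch h)
  | tapp _ _ _ _ _ => exact iff_of_false (fun h => nomatch h) (fun h => nomatch h)
  | choice _ => exact iff_of_false (fun h => nomatch h) (fun h => nomatch h)

end RelBasic

end CountChoice

namespace CountChoice

theorem CtxWf.map_rename {Δ Δ' : ℕ} {Γ : List Ty} {ρ : ℕ → ℕ} (hΓ : CtxWf Δ Γ)
    (hρ : ∀ i < Δ, ρ i < Δ') : CtxWf Δ' (Γ.map (Ty.rename ρ)) := by
  intro A hA
  rcases List.mem_map.1 hA with ⟨B, hB, rfl⟩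
  exact (hΓ B hB).rename hρ

theorem CtxWf.map_subst {Δ Δ' : ℕ} {Γ : List Ty} {δ : ℕ → Ty} (hΓ : CtxWf Δ Γ)
    (hδ : ∀ i < Δ, (δ i).Wf Δ') : CtxWf Δ' (Γ.map (Ty.subst δ)) := by
  intro A hA
  rcases List.mem_map.1 hA with ⟨B, hB, rfl⟩
  exact (hΓ B hB).subst hδ

theorem map_rename_succ_comm (Γ : List Ty) (ρ : ℕ → ℕ) :
    (Γ.map (Ty.rename Nat.succ)).map (Ty.rename (liftR ρ)) =
    (Γ.map (Ty.rename ρ)).map (Ty.rename Nat.succ) := by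
  rw [List.map_map, List.map_map]
  apply List.map_congr_left
  intro t _
  show (t.rename Nat.succ).rename (liftR ρ) = (t.rename ρ).rename Nat.succ
  rw [Ty.rename_rename, Ty.rename_rename]
  congr 1

theorem map_subst_succ_comm (Γ : List Ty) (δ : ℕ → Ty) :
    (Γ.map (Ty.rename Nat.succ)).map (Ty.subst (liftS δ)) =
    (Γ.map (Ty.subst δ)).map (Ty.rename Nat.succ) := by
  rw [List.map_map, List.map_map]
  apply List.map_congr_left
  intro t _
  show (t.rename Nat.succ).subst (liftS δ) = (t.subst δ).rename Nat.succ
  rw [Ty.subst_rename, Ty.rename_subst]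
  rfl

section RelSubst

variable {τ σ : Ty} {f g : Tm}

theorem Rel.tyRenameL (hτ0 : Ty.Wf 0 τ) (hσ0 : Ty.Wf 0 σ)
    (hfT : HasTy 0 [] f (.arrow τ σ)) (hgT : HasTy 0 [] g (.arrow τ σ))
    {Δ : ℕ} {Γ : List Ty} {a b : Tm} {A : Ty} (h : Rel τ σ f g Δ Γ a b A) :
    ∀ Δ' (ρ : ℕ → ℕ), (∀ i < Δ, ρ i < Δ') →
    Rel τ σ f g Δ' (Γ.map (Ty.rename ρ)) (a.tyRename ρ) (b.tyRename ρ) (A.rename ρ) := by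
  induction h with
  | baseFG hΓ =>
      intro Δ' ρ hρ
      rw [Tm.tyRename_eq_closed hfT, Tm.tyRename_eq_closed hgT,
        Ty.rename_eq_of_wf0 (t := .arrow τ σ) ⟨hτ0, hσ0⟩ ρ]
      exact .baseFG (hΓ.map_rename hρ)
  | baseGF hΓ =>
      intro Δ' ρ hρ
      rw [Tm.tyRename_eq_closed hfT, Tm.tyRename_eq_closed hgT,
        Ty.rename_eq_of_wf0 (t := .arrow τ σ) ⟨hτ0, hσ0⟩ ρ]
      exact .baseGF (hΓ.map_rename hρ)
  | var hΓ hx =>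
      intro Δ' ρ hρ
      exact .var (hΓ.map_rename hρ) (by rw [List.getElem?_map, hx]; rfl)
  | unit hΓ => intro Δ' ρ hρ; exact .unit (hΓ.map_rename hρ)
  | pair h1 h2 h1' h2' _ _ ih1 ih2 =>
      intro Δ' ρ hρ
      exact .pair (h1.tyRename ρ) (h2.tyRename ρ) (h1'.tyRename ρ) (h2'.tyRename ρ)
        (ih1 Δ' ρ hρ) (ih2 Δ' ρ hρ)
  | lam hw _ ih =>
      intro Δ' ρ hρ
      exact .lam (hw.rename hρ) (ih Δ' ρ hρ)
  | inj hj hv hv' hw _ ih =>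
      intro Δ' ρ hρ
      refine .inj hj (hv.tyRename ρ) (hv'.tyRename ρ) (hw.rename hρ) ?_
      have := ih Δ' ρ hρ
      rwa [Ty.subst1_rename] at this
  | tlam _ ih =>
      intro Δ' ρ hρ
      refine .tlam ?_
      have := ih (Δ' + 1) (liftR ρ) (liftR_lt hρ)
      rwa [map_rename_succ_comm] at this
  | proj b hv hv' _ ih =>
      intro Δ' ρ hρ
      cases b
      · exact .proj false (hv.tyRename ρ) (hv'.tyRename ρ) (ih Δ' ρ hρ)
      · exact .proj true (hv.tyRename ρ) (hv'.tyRename ρ) (ih Δ' ρ hρ)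
  | app hv hv' _ _ ih1 ih2 =>
      intro Δ' ρ hρ
      exact .app (hv.tyRename ρ) (hv'.tyRename ρ) (ih1 Δ' ρ hρ) (ih2 Δ' ρ hρ)
  | case hv hv' _ _ ihv ihs =>
      intro Δ' ρ hρ
      refine .case (hv.tyRename ρ) (hv'.tyRename ρ) (ihv Δ' ρ hρ) (fun j => ?_)
      have := ihs j Δ' ρ hρ
      rw [List.map_cons, Ty.subst1_rename] at this
      exact this
  | tapp hv hv' _ hw ih =>
      intro Δ' ρ hρ
      rw [Ty.subst1_rename]
      exact .tapp (hv.tyRename ρ) (hv'.tyRename ρ) (ih Δ' ρ hρ) (hw.rename hρ)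
  | choice hΓ =>
      intro Δ' ρ hρ
      rw [Ty.rename_eq_of_wf0 (natTy_wf 0) ρ]
      exact .choice (hΓ.map_rename hρ)

theorem Rel.tySubstL (hτ0 : Ty.Wf 0 τ) (hσ0 : Ty.Wf 0 σ)
    (hfT : HasTy 0 [] f (.arrow τ σ)) (hgT : HasTy 0 [] g (.arrow τ σ))
    {Δ : ℕ} {Γ : List Ty} {a b : Tm} {A : Ty} (h : Rel τ σ f g Δ Γ a b A) :
    ∀ Δ' (δ : ℕ → Ty), (∀ i < Δ, (δ i).Wf Δ') →
    Rel τ σ f g Δ' (Γ.map (Ty.subst δ)) (a.tySubst δ) (b.tySubst δ) (A.subst δ) := by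
  induction h with
  | baseFG hΓ =>
      intro Δ' δ hδ
      rw [Tm.tySubst_eq_closed hfT, Tm.tySubst_eq_closed hgT,
        Ty.subst_eq_of_wf0 (t := .arrow τ σ) ⟨hτ0, hσ0⟩ δ]
      exact .baseFG (hΓ.map_subst hδ)
  | baseGF hΓ =>
      intro Δ' δ hδ
      rw [Tm.tySubst_eq_closed hfT, Tm.tySubst_eq_closed hgT,
        Ty.subst_eq_of_wf0 (t := .arrow τ σ) ⟨hτ0, hσ0⟩ δ]
      exact .baseGF (hΓ.map_subst hδ)
  | var hΓ hx =>
      intro Δ' δ hδ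
      exact .var (hΓ.map_subst hδ) (by rw [List.getElem?_map, hx]; rfl)
  | unit hΓ => intro Δ' δ hδ; exact .unit (hΓ.map_subst hδ)
  | pair h1 h2 h1' h2' _ _ ih1 ih2 =>
      intro Δ' δ hδ
      exact .pair (h1.tySubst δ) (h2.tySubst δ) (h1'.tySubst δ) (h2'.tySubst δ)
        (ih1 Δ' δ hδ) (ih2 Δ' δ hδ)
  | lam hw _ ih =>
      intro Δ' δ hδ
      exact .lam (hw.subst hδ) (ih Δ' δ hδ)
  | inj hj hv hv' hw _ ih =>
      intro Δ' δ hδ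
      refine .inj hj (hv.tySubst δ) (hv'.tySubst δ) (hw.subst hδ) ?_
      have := ih Δ' δ hδ
      rwa [Ty.subst1_subst] at this
  | tlam _ ih =>
      intro Δ' δ hδ
      refine .tlam ?_
      have := ih (Δ' + 1) (liftS δ) (liftS_wf hδ)
      rwa [map_subst_succ_comm] at this
  | proj b hv hv' _ ih =>
      intro Δ' δ hδ
      cases b
      · exact .proj false (hv.tySubst δ) (hv'.tySubst δ) (ih Δ' δ hδ)
      · exact .proj true (hv.tySubst δ) (hv'.tySubst δ) (ih Δ' δ hδ)
  | app hv hv' _ _ ih1 ih2 =>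
      intro Δ' δ hδ
      exact .app (hv.tySubst δ) (hv'.tySubst δ) (ih1 Δ' δ hδ) (ih2 Δ' δ hδ)
  | case hv hv' _ _ ihv ihs =>
      intro Δ' δ hδ
      refine .case (hv.tySubst δ) (hv'.tySubst δ) (ihv Δ' δ hδ) (fun j => ?_)
      have := ihs j Δ' δ hδ
      rw [List.map_cons, Ty.subst1_subst] at this
      exact this
  | tapp hv hv' _ hw ih =>
      intro Δ' δ hδ
      rw [Ty.subst1_subst]
      exact .tapp (hv.tySubst δ) (hv'.tySubst δ) (ih Δ' δ hδ) (hw.subst hδ)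
  | choice hΓ =>
      intro Δ' δ hδ
      rw [Ty.subst_eq_of_wf0 (natTy_wf 0) δ]
      exact .choice (hΓ.map_subst hδ)

theorem Rel.renameT (hfT : HasTy 0 [] f (.arrow τ σ)) (hgT : HasTy 0 [] g (.arrow τ σ))
    {Δ : ℕ} {Γ : List Ty} {a b : Tm} {A : Ty} (h : Rel τ σ f g Δ Γ a b A) :
    ∀ (Γ' : List Ty) (ρ : ℕ → ℕ), CtxWf Δ Γ' →
    (∀ i A', Γ[i]? = some A' → Γ'[ρ i]? = some A') →
    Rel τ σ f g Δ Γ' (a.rename ρ) (b.rename ρ) A := by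
  induction h with
  | baseFG hΓ =>
      intro Γ' ρ hΓ' hρ
      rw [Tm.rename_eq_closed hfT, Tm.rename_eq_closed hgT]
      exact .baseFG hΓ'
  | baseGF hΓ =>
      intro Γ' ρ hΓ' hρ
      rw [Tm.rename_eq_closed hfT, Tm.rename_eq_closed hgT]
      exact .baseGF hΓ'
  | var hΓ hx =>
      intro Γ' ρ hΓ' hρ
      exact .var hΓ' (hρ _ _ hx)
  | unit hΓ => intro Γ' ρ hΓ' hρ; exact .unit hΓ'
  | pair h1 h2 h1' h2' _ _ ih1 ih2 =>
      intro Γ' ρ hΓ' hρ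
      exact .pair (h1.rename ρ) (h2.rename ρ) (h1'.rename ρ) (h2'.rename ρ)
        (ih1 Γ' ρ hΓ' hρ) (ih2 Γ' ρ hΓ' hρ)
  | lam hw _ ih =>
      intro Γ' ρ hΓ' hρ
      refine .lam hw (ih _ (liftR ρ) (CtxWf.cons hw hΓ') ?_)
      intro i A' hi
      cases i with
      | zero =>
          rw [List.getElem?_cons_zero] at hi
          cases hi
          exact List.getElem?_cons_zero
      | succ i =>
          rw [List.getElem?_cons_succ] at hi
          show (_ :: Γ')[ρ i + 1]? = some A'
          rw [List.getElem?_cons_succ]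
          exact hρ _ _ hi
  | inj hj hv hv' hw _ ih =>
      intro Γ' ρ hΓ' hρ
      exact .inj hj (hv.rename ρ) (hv'.rename ρ) hw (ih Γ' ρ hΓ' hρ)
  | tlam _ ih =>
      intro Γ' ρ hΓ' hρ
      refine .tlam (ih _ ρ hΓ'.map_rename_succ ?_)
      intro i A' hi
      rw [List.getElem?_map] at hi ⊢
      rcases Option.map_eq_some_iff.1 hi with ⟨B, hB, rfl⟩
      rw [hρ _ _ hB]
      rfl
  | proj b hv hv' _ ih =>
      intro Γ' ρ hΓ' hρ
      exact .proj b (hv.rename ρ) (hv'.rename ρ) (ih Γ' ρ hΓ' hρ)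
  | app hv hv' _ _ ih1 ih2 =>
      intro Γ' ρ hΓ' hρ
      exact .app (hv.rename ρ) (hv'.rename ρ) (ih1 Γ' ρ hΓ' hρ) (ih2 Γ' ρ hΓ' hρ)
  | case hv hv' htv hts ihv ihs =>
      intro Γ' ρ hΓ' hρ
      refine .case (hv.rename ρ) (hv'.rename ρ) (ihv Γ' ρ hΓ' hρ) (fun j => ?_)
      have hwfj : Ty.Wf _ (Ty.subst1 _ _) := (hts j).wt hfT hgT |>.1.ctxWf _ (List.mem_cons_self)
      refine ihs j _ (liftR ρ) (CtxWf.cons hwfj hΓ') ?_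
      intro i A' hi
      cases i with
      | zero =>
          rw [List.getElem?_cons_zero] at hi
          cases hi
          exact List.getElem?_cons_zero
      | succ i =>
          rw [List.getElem?_cons_succ] at hi
          show (_ :: Γ')[ρ i + 1]? = some A'
          rw [List.getElem?_cons_succ]
          exact hρ _ _ hi
  | tapp hv hv' _ hw ih =>
      intro Γ' ρ hΓ' hρ
      exact .tapp (hv.rename ρ) (hv'.rename ρ) (ih Γ' ρ hΓ' hρ) hw
  | choice hΓ => intro Γ' ρ hΓ' hρ; exact .choice hΓ'

theorem Rel.substT (hτ0 : Ty.Wf 0 τ) (hσ0 : Ty.Wf 0 σ)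
    (hfT : HasTy 0 [] f (.arrow τ σ)) (hgT : HasTy 0 [] g (.arrow τ σ))
    {Δ : ℕ} {Γ : List Ty} {a b : Tm} {A : Ty} (h : Rel τ σ f g Δ Γ a b A) :
    ∀ (Γ' : List Ty) (γ γ' : ℕ → Tm), CtxWf Δ Γ' →
    (∀ i, IsVal (γ i) ∧ IsVal (γ' i)) →
    (∀ i A', Γ[i]? = some A' → Rel τ σ f g Δ Γ' (γ i) (γ' i) A') →
    Rel τ σ f g Δ Γ' (a.subst γ) (b.subst γ') A := by
  induction h with
  | baseFG hΓ =>
      intro Γ' γ γ' hΓ' hvals hrel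
      rw [Tm.subst_eq_closed hfT, Tm.subst_eq_closed hgT]
      exact .baseFG hΓ'
  | baseGF hΓ =>
      intro Γ' γ γ' hΓ' hvals hrel
      rw [Tm.subst_eq_closed hfT, Tm.subst_eq_closed hgT]
      exact .baseGF hΓ'
  | var hΓ hx => intro Γ' γ γ' hΓ' hvals hrel; exact hrel _ _ hx
  | unit hΓ => intro Γ' γ γ' hΓ' hvals hrel; exact .unit hΓ'
  | pair h1 h2 h1' h2' _ _ ih1 ih2 =>
      intro Γ' γ γ' hΓ' hvals hrel
      exact .pair (h1.subst (fun i => (hvals i).1)) (h2.subst (fun i => (hvals i).1))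
        (h1'.subst (fun i => (hvals i).2)) (h2'.subst (fun i => (hvals i).2))
        (ih1 Γ' γ γ' hΓ' hvals hrel) (ih2 Γ' γ γ' hΓ' hvals hrel)
  | lam hw _ ih =>
      intro Γ' γ γ' hΓ' hvals hrel
      refine .lam hw (ih _ (liftT γ) (liftT γ') (CtxWf.cons hw hΓ')
        (fun i => ⟨liftT_val (fun k => (hvals k).1) i, liftT_val (fun k => (hvals k).2) i⟩) ?_)
      intro i A' hi
      cases i with
      | zero =>
          rw [List.getElem?_cons_zero] at hi
          cases hi
          exact .var (CtxWf.cons hw hΓ') (by simp)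
      | succ i =>
          rw [List.getElem?_cons_succ] at hi
          show Rel τ σ f g _ _ ((γ i).rename Nat.succ) ((γ' i).rename Nat.succ) A'
          refine (hrel i A' hi).renameT hfT hgT _ Nat.succ (CtxWf.cons hw hΓ') ?_
          intro k B hk
          rw [List.getElem?_cons_succ]
          exact hk
  | inj hj hv hv' hw _ ih =>
      intro Γ' γ γ' hΓ' hvals hrel
      exact .inj hj (hv.subst (fun i => (hvals i).1)) (hv'.subst (fun i => (hvals i).2))
        hw (ih Γ' γ γ' hΓ' hvals hrel)
  | tlam _ ih =>
      intro Γ' γ γ' hΓ' hvals hrel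
      refine .tlam (ih _ (fun i => (γ i).tyRename Nat.succ) (fun i => (γ' i).tyRename Nat.succ)
        hΓ'.map_rename_succ
        (fun i => ⟨(hvals i).1.tyRename _, (hvals i).2.tyRename _⟩) ?_)
      intro i A' hi
      rw [List.getElem?_map] at hi
      rcases Option.map_eq_some_iff.1 hi with ⟨B, hB, rfl⟩
      exact (hrel i B hB).tyRenameL hτ0 hσ0 hfT hgT _ Nat.succ
        (fun k hk => Nat.succ_lt_succ hk)
  | proj b hv hv' _ ih =>
      intro Γ' γ γ' hΓ' hvals hrel
      exact .proj b (hv.subst (fun i => (hvals i).1)) (hv'.subst (fun i => (hvals i).2))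
        (ih Γ' γ γ' hΓ' hvals hrel)
  | app hv hv' _ _ ih1 ih2 =>
      intro Γ' γ γ' hΓ' hvals hrel
      exact .app (hv.subst (fun i => (hvals i).1)) (hv'.subst (fun i => (hvals i).2))
        (ih1 Γ' γ γ' hΓ' hvals hrel) (ih2 Γ' γ γ' hΓ' hvals hrel)
  | case hv hv' htv hts ihv ihs =>
      intro Γ' γ γ' hΓ' hvals hrel
      refine .case (hv.subst (fun i => (hvals i).1)) (hv'.subst (fun i => (hvals i).2))
        (ihv Γ' γ γ' hΓ' hvals hrel) (fun j => ?_)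
      have hwfj : Ty.Wf _ (Ty.subst1 _ _) :=
        (hts j).wt hfT hgT |>.1.ctxWf _ (List.mem_cons_self)
      refine ihs j _ (liftT γ) (liftT γ') (CtxWf.cons hwfj hΓ')
        (fun i => ⟨liftT_val (fun k => (hvals k).1) i, liftT_val (fun k => (hvals k).2) i⟩) ?_
      intro i A' hi
      cases i with
      | zero =>
          rw [List.getElem?_cons_zero] at hi
          cases hi
          exact .var (CtxWf.cons hwfj hΓ') (by simp)
      | succ i =>
          rw [List.getElem?_cons_succ] at hi
          show Rel τ σ f g _ _ ((γ i).rename Nat.succ) ((γ' i).rename Nat.succ) A'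
          refine (hrel i A' hi).renameT hfT hgT _ Nat.succ (CtxWf.cons hwfj hΓ') ?_
          intro k B hk
          rw [List.getElem?_cons_succ]
          exact hk
  | tapp hv hv' _ hw ih =>
      intro Γ' γ γ' hΓ' hvals hrel
      exact .tapp (hv.subst (fun i => (hvals i).1)) (hv'.subst (fun i => (hvals i).2))
        (ih Γ' γ γ' hΓ' hvals hrel) hw
  | choice hΓ => intro Γ' γ γ' hΓ' hvals hrel; exact .choice hΓ'

end RelSubst

end CountChoice

namespace CountChoice

/-! ### Head steps and decomposition of steps -/

inductive HeadStep : Tm → Lbl → Tm → Prop where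
  | projFst : ∀ {v₁ v₂}, IsVal v₁ → IsVal v₂ →
      HeadStep (.proj false (.pair v₁ v₂)) .projred v₁
  | projSnd : ∀ {v₁ v₂}, IsVal v₁ → IsVal v₂ →
      HeadStep (.proj true (.pair v₁ v₂)) .projred v₂
  | beta : ∀ {e v}, IsVal v → HeadStep (.app (.lam e) v) .beta (subst1 v e)
  | tbeta : ∀ {e A}, HeadStep (.tapp (.tlam e) A) .tbeta (tySubst1 A e)
  | caseInj : ∀ {m : ℕ} {es : Fin m → Tm} {j : ℕ} {v} (h : j < m), IsVal v →
      HeadStep (.case (.inj j v) m es) .unfold (subst1 v (es ⟨j, h⟩))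
  | choice : ∀ n : ℕ, HeadStep .choice .choice (numeral n)

theorem plug_nil (e : Tm) : plug [] e = e := rfl

theorem plug_cons (v : Tm) (E : List Tm) (e : Tm) :
    plug (v :: E) e = .app v (plug E e) := rfl

theorem HeadStep.toStep {r : Tm} {l : Lbl} {r' : Tm} (h : HeadStep r l r') :
    Step r l r' := by
  cases h with
  | projFst h1 h2 => exact .projFst h1 h2
  | projSnd h1 h2 => exact .projSnd h1 h2
  | beta hv => exact .beta hv
  | tbeta => exact .tbeta
  | caseInj hj hv => exact .caseInj hj hv
  | choice n => exact .choice n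

theorem step_decomp {T : Tm} {l : Lbl} {S : Tm} (h : Step T l S) :
    ∃ E r r', (∀ v ∈ E, IsVal v) ∧ T = plug E r ∧ S = plug E r' ∧ HeadStep r l r' := by
  induction h with
  | projFst h1 h2 => exact ⟨[], _, _, by simp, rfl, rfl, .projFst h1 h2⟩
  | projSnd h1 h2 => exact ⟨[], _, _, by simp, rfl, rfl, .projSnd h1 h2⟩
  | beta hv => exact ⟨[], _, _, by simp, rfl, rfl, .beta hv⟩
  | tbeta => exact ⟨[], _, _, by simp, rfl, rfl, .tbeta⟩
  | caseInj hj hv => exact ⟨[], _, _, by simp, rfl, rfl, .caseInj hj hv⟩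
  | choice n => exact ⟨[], _, _, by simp, rfl, rfl, .choice n⟩
  | appArg hv hs ih =>
      rcases ih with ⟨E, r, r', hE, rfl, rfl, hh⟩
      refine ⟨_ :: E, r, r', ?_, rfl, rfl, hh⟩
      intro w hw
      rcases List.mem_cons.1 hw with rfl | hw
      · exact hv
      · exact hE w hw

theorem step_plug {E : List Tm} (hE : ∀ v ∈ E, IsVal v) {r : Tm} {l : Lbl} {r' : Tm}
    (h : Step r l r') : Step (plug E r) l (plug E r') := by
  induction E with
  | nil => exact h
  | cons v E ih =>
      rw [plug_cons, plug_cons]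
      exact Step.appArg (hE v (List.mem_cons_self))
        (ih (fun w hw => hE w (List.mem_cons_of_mem _ hw)))

/-! ### Convergence lemmas -/

theorem MayConv.of_val {v : Tm} (h : IsVal v) : MayConv v := ⟨0, v, .refl, h⟩

theorem MayConv.head {a : Tm} {l : Lbl} {b : Tm} (h : Step a l b) (hc : MayConv b) :
    MayConv a := by
  rcases hc with ⟨n, w, d, hw⟩
  cases l with
  | unfold => exact ⟨n + 1, w, .unfold h d, hw⟩
  | beta => exact ⟨n, w, .other (fun hc => Lbl.noConfusion hc) h d, hw⟩
  | projred => exact ⟨n, w, .other (fun hc => Lbl.noConfusion hc) h d, hw⟩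
  | tbeta => exact ⟨n, w, .other (fun hc => Lbl.noConfusion hc) h d, hw⟩
  | choice => exact ⟨n, w, .other (fun hc => Lbl.noConfusion hc) h d, hw⟩

/-! ### Related evaluation stacks -/

inductive RelStack (τ σ : Ty) (f g : Tm) : List Tm → List Tm → Ty → Ty → Prop where
  | nil : ∀ {A}, RelStack τ σ f g [] [] A A
  | cons : ∀ {v w E E' C A B}, IsVal v → IsVal w →
      Rel τ σ f g 0 [] v w (.arrow A B) → RelStack τ σ f g E E' C A →
      RelStack τ σ f g (v :: E) (w :: E') C B

section Stacks

variable {τ σ : Ty} {f g : Tm}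
variable (hfv : IsVal f) (hgv : IsVal g)
variable (hfT : HasTy 0 [] f (.arrow τ σ)) (hgT : HasTy 0 [] g (.arrow τ σ))

include hfv hgv hfT hgT in
theorem rel_stack_inv : ∀ {E : List Tm} {a T' : Tm} {A : Ty},
    Rel τ σ f g 0 [] (plug E a) T' A → (∀ v ∈ E, IsVal v) →
    ∃ E' a' C, T' = plug E' a' ∧ RelStack τ σ f g E E' C A ∧
      Rel τ σ f g 0 [] a a' C := by
  intro E
  induction E with
  | nil =>
      intro a T' A h _
      exact ⟨[], T', A, rfl, .nil, h⟩
  | cons v E ih =>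
      intro a T' A h hE
      rw [plug_cons] at h
      cases h with
      | baseFG hΓ => exact absurd hfv (by intro hc; exact (fun hx => nomatch hx) hc)
      | baseGF hΓ => exact absurd hgv (by intro hc; exact (fun hx => nomatch hx) hc)
      | app hv hv' h1 h2 =>
          rcases ih h2 (fun w hw => hE w (List.mem_cons_of_mem _ hw)) with
            ⟨E', a', C, rfl, st, hrel⟩
          exact ⟨_ :: E', a', C, rfl, .cons hv hv' h1 st, hrel⟩

theorem rel_stack_plug {E E' : List Tm} {C A : Ty}
    (st : RelStack τ σ f g E E' C A) {s s' : Tm}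
    (h : Rel τ σ f g 0 [] s s' C) :
    Rel τ σ f g 0 [] (plug E s) (plug E' s') A := by
  induction st with
  | nil => exact h
  | cons hv hw hrel st ih =>
      rw [plug_cons, plug_cons]
      exact .app hv hw hrel (ih h)

theorem rel_stack_vals {E E' : List Tm} {C A : Ty}
    (st : RelStack τ σ f g E E' C A) : ∀ w ∈ E', IsVal w := by
  induction st with
  | nil => intro w hw; cases hw
  | cons hv hw hrel st ih =>
      intro u hu
      rcases List.mem_cons.1 hu with rfl | hu
      · exact hw
      · exact ih u hu

include hfT hgT in
theorem stack_ctx_lift {E E' : List Tm} {C A : Ty}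
    (st : RelStack τ σ f g E E' C A) {R : TIRel} (hRefl : ReflRel R)
    (hComp : Compatible R) {x y : Tm} (hxy : R 0 [] x y C) :
    R 0 [] (plug E' x) (plug E' y) A := by
  induction st with
  | nil => exact hxy
  | cons hv hw hrel st ih =>
      rw [plug_cons, plug_cons]
      exact hComp.app hw hw (hRefl _ _ _ _ (hrel.wt hfT hgT).2) (ih hxy)

include hfT hgT in
theorem stack_ctxmay_lift {E E' : List Tm} {C A : Ty}
    (st : RelStack τ σ f g E E' C A) {x y : Tm} (hxy : CtxMay 0 [] x y C)
    (hc : MayConv (plug E' x)) : MayConv (plug E' y) := by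
  rcases hxy with ⟨R, hwt, hrefl, htrans, hcomp, hadeq, hR⟩
  exact hadeq _ _ _ (stack_ctx_lift hfT hgT st hrefl hcomp hR) hc

end Stacks

end CountChoice

namespace CountChoice

section Adequacy

variable {τ σ : Ty} {f g : Tm}

theorem rel_adequacy_step
    (hτ0 : Ty.Wf 0 τ) (hσ0 : Ty.Wf 0 σ)
    (hfv : IsVal f) (hgv : IsVal g)
    (hfT : HasTy 0 [] f (.arrow τ σ)) (hgT : HasTy 0 [] g (.arrow τ σ))
    (h : ∀ u, IsVal u → HasTy 0 [] u τ →
      CtxMayEq 0 [] (.app f u) (.app g u) σ)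
    {T S : Tm} {l : Lbl} (hstep : Step T l S)
    (IH : ∀ T'' A', Rel τ σ f g 0 [] S T'' A' → MayConv T'')
    {T' : Tm} {A : Ty} (hrel : Rel τ σ f g 0 [] T T' A) : MayConv T' := by
  rcases step_decomp hstep with ⟨E, r, r', hE, rfl, rfl, hh⟩
  rcases rel_stack_inv hfv hgv hfT hgT hrel hE with ⟨E', a', C, rfl, st, hr⟩
  have hE' := rel_stack_vals st
  clear hrel
  cases hh with
  | projFst h1 h2 =>
      cases hr with
      | baseFG hΓ => exact absurd hfv (fun hx => nomatch hx)
      | baseGF hΓ => exact absurd hgv (fun hx => nomatch hx)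
      | proj b hv hv' hp =>
          cases hp with
          | pair k1 k2 k1' k2' hq1 hq2 =>
              exact MayConv.head
                (step_plug hE' (HeadStep.projFst k1' k2').toStep)
                (IH _ _ (rel_stack_plug st hq1))
  | projSnd h1 h2 =>
      cases hr with
      | baseFG hΓ => exact absurd hfv (fun hx => nomatch hx)
      | baseGF hΓ => exact absurd hgv (fun hx => nomatch hx)
      | proj b hv hv' hp =>
          cases hp with
          | pair k1 k2 k1' k2' hq1 hq2 =>
              exact MayConv.head
                (step_plug hE' (HeadStep.projSnd k1' k2').toStep)
                (IH _ _ (rel_stack_plug st hq2))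
  | @beta e u hu =>
      cases hr with
      | baseFG hΓ => exact absurd hfv (fun hx => nomatch hx)
      | baseGF hΓ => exact absurd hgv (fun hx => nomatch hx)
      | @app _ _ _ w _ u' A₁ _ hv1 hv1' hfun harg =>
          have hu' : IsVal u' := ((harg.val hfv hgv).1 hu)
          cases hfun with
          | @lam _ _ _ e2 _ _ hw hbody =>
              have hsub := hbody.substT hτ0 hσ0 hfT hgT []
                (consTm u Tm.var) (consTm u' Tm.var) CtxWf.nil
                (fun i => by
                  cases i with
                  | zero => exact ⟨hu, hu'⟩
                  | succ i => exact ⟨.var, .var⟩)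
                (fun i A' hi => by
                  cases i with
                  | zero =>
                      rw [List.getElem?_cons_zero] at hi
                      cases hi
                      exact harg
                  | succ i => simp at hi)
              exact MayConv.head
                (step_plug hE' (HeadStep.beta hu').toStep)
                (IH _ _ (rel_stack_plug st hsub))
          | baseFG hΓ =>
              -- here f = .lam e and w = g
              have hu'T : HasTy 0 [] u' τ := (harg.wt hfT hgT).2
              cases hfT with
              | lam hwτ hbodyT =>
                have hbodyR : Rel τ σ (.lam e) g 0 [τ] e e σ := Rel.refl hbodyT
                have hsub := hbodyR.substT hτ0 hσ0 (HasTy.lam hwτ hbodyT) hgT []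
                  (consTm u Tm.var) (consTm u' Tm.var) CtxWf.nil
                  (fun i => by
                    cases i with
                    | zero => exact ⟨hu, hu'⟩
                    | succ i => exact ⟨.var, .var⟩)
                  (fun i A' hi => by
                    cases i with
                    | zero =>
                        rw [List.getElem?_cons_zero] at hi
                        cases hi
                        exact harg
                    | succ i => simp at hi)
                have hconv1 := IH _ _ (rel_stack_plug st hsub)
                have hconv2 : MayConv (plug E' (.app (.lam e) u')) :=
                  MayConv.head (step_plug hE' (HeadStep.beta hu').toStep) hconv1
                exact stack_ctxmay_lift (HasTy.lam hwτ hbodyT) hgT st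
                  (h _ hu' hu'T).1 hconv2
          | baseGF hΓ =>
              -- here g = .lam e and w = f
              have hu'T : HasTy 0 [] u' τ := (harg.wt hfT hgT).2
              cases hgT with
              | lam hwτ hbodyT =>
                have hbodyR : Rel τ σ f (.lam e) 0 [τ] e e σ := Rel.refl hbodyT
                have hsub := hbodyR.substT hτ0 hσ0 hfT (HasTy.lam hwτ hbodyT) []
                  (consTm u Tm.var) (consTm u' Tm.var) CtxWf.nil
                  (fun i => by
                    cases i with
                    | zero => exact ⟨hu, hu'⟩
                    | succ i => exact ⟨.var, .var⟩)
                  (fun i A' hi => by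
                    cases i with
                    | zero =>
                        rw [List.getElem?_cons_zero] at hi
                        cases hi
                        exact harg
                    | succ i => simp at hi)
                have hconv1 := IH _ _ (rel_stack_plug st hsub)
                have hconv2 : MayConv (plug E' (.app (.lam e) u')) :=
                  MayConv.head (step_plug hE' (HeadStep.beta hu').toStep) hconv1
                exact stack_ctxmay_lift hfT (HasTy.lam hwτ hbodyT) st
                  (h _ hu' hu'T).2 hconv2
  | @tbeta e B =>
      cases hr with
      | baseFG hΓ => exact absurd hfv (fun hx => nomatch hx)
      | baseGF hΓ => exact absurd hgv (fun hx => nomatch hx)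
      | tapp hv1 hv1' hfun hwB =>
          cases hfun with
          | tlam hb =>
              have hsub := hb.tySubstL hτ0 hσ0 hfT hgT 0 (consTy B Ty.var)
                (fun i hi => by
                  cases i with
                  | zero => exact hwB
                  | succ i => omega)
              exact MayConv.head
                (step_plug hE' HeadStep.tbeta.toStep)
                (IH _ _ (rel_stack_plug st hsub))
  | @caseInj m es j u hj hu =>
      cases hr with
      | baseFG hΓ => exact absurd hfv (fun hx => nomatch hx)
      | baseGF hΓ => exact absurd hgv (fun hx => nomatch hx)
      | @case _ _ _ w _ _ ts _ es2 hv1 hv1' hvv hbr =>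
          cases hvv with
          | @inj _ _ _ u2 _ _ _ hj' ku ku' hwmu hurel =>
              have hsub := (hbr ⟨j, hj⟩).substT hτ0 hσ0 hfT hgT []
                (consTm u Tm.var) (consTm u2 Tm.var) CtxWf.nil
                (fun i => by
                  cases i with
                  | zero => exact ⟨hu, ku'⟩
                  | succ i => exact ⟨.var, .var⟩)
                (fun i A' hi => by
                  cases i with
                  | zero =>
                      rw [List.getElem?_cons_zero] at hi
                      cases hi
                      exact hurel
                  | succ i => simp at hi)
              exact MayConv.head
                (step_plug hE' (HeadStep.caseInj hj ku').toStep)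
                (IH _ _ (rel_stack_plug st hsub))
  | choice n =>
      cases hr with
      | baseFG hΓ => exact absurd hfv (fun hx => nomatch hx)
      | baseGF hΓ => exact absurd hgv (fun hx => nomatch hx)
      | choice hΓ =>
          exact MayConv.head
            (step_plug hE' (HeadStep.choice n).toStep)
            (IH _ _ (rel_stack_plug st (Rel.refl (numeral_hasTy n CtxWf.nil))))

theorem rel_adequacy
    (hτ0 : Ty.Wf 0 τ) (hσ0 : Ty.Wf 0 σ)
    (hfv : IsVal f) (hgv : IsVal g)
    (hfT : HasTy 0 [] f (.arrow τ σ)) (hgT : HasTy 0 [] g (.arrow τ σ))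
    (h : ∀ u, IsVal u → HasTy 0 [] u τ →
      CtxMayEq 0 [] (.app f u) (.app g u) σ)
    {T : Tm} {n : ℕ} {v : Tm} (d : StepsU T n v) :
    IsVal v → ∀ T' A, Rel τ σ f g 0 [] T T' A → MayConv T' := by
  induction d with
  | refl =>
      intro hv T' A hrel
      exact .of_val ((hrel.val hfv hgv).1 hv)
  | unfold hstep d ih =>
      intro hv T' A hrel
      exact rel_adequacy_step hτ0 hσ0 hfv hgv hfT hgT h hstep (ih hv) hrel
  | other hne hstep d ih =>
      intro hv T' A hrel
      exact rel_adequacy_step hτ0 hσ0 hfv hgv hfT hgT h hstep (ih hv) hrel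

theorem rel_mayconv
    (hτ0 : Ty.Wf 0 τ) (hσ0 : Ty.Wf 0 σ)
    (hfv : IsVal f) (hgv : IsVal g)
    (hfT : HasTy 0 [] f (.arrow τ σ)) (hgT : HasTy 0 [] g (.arrow τ σ))
    (h : ∀ u, IsVal u → HasTy 0 [] u τ →
      CtxMayEq 0 [] (.app f u) (.app g u) σ)
    {T T' : Tm} {A : Ty} (hrel : Rel τ σ f g 0 [] T T' A) (hc : MayConv T) :
    MayConv T' := by
  rcases hc with ⟨n, v, d, hv⟩
  exact rel_adequacy hτ0 hσ0 hfv hgv hfT hgT h d hv T' A hrel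

end Adequacy

end CountChoice

namespace CountChoice

/-! ### The reflexive–transitive closure of `Rel` as a precongruence -/

def RelStar (τ σ : Ty) (f g : Tm) : TIRel := fun Δ Γ a b A =>
  HasTy Δ Γ a A ∧
  Relation.ReflTransGen (fun x y => Rel τ σ f g Δ Γ x y A) a b

section Star

variable {τ σ : Ty} {f g : Tm}
variable (hτ0 : Ty.Wf 0 τ) (hσ0 : Ty.Wf 0 σ)
variable (hfv : IsVal f) (hgv : IsVal g)
variable (hfT : HasTy 0 [] f (.arrow τ σ)) (hgT : HasTy 0 [] g (.arrow τ σ))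

include hfT hgT in
theorem chain_wt {Δ Γ a b A}
    (ch : Relation.ReflTransGen (fun x y => Rel τ σ f g Δ Γ x y A) a b)
    (ht : HasTy Δ Γ a A) : HasTy Δ Γ b A := by
  induction ch with
  | refl => exact ht
  | tail hc hstep ih => exact (hstep.wt hfT hgT).2

include hfv hgv in
theorem chain_val {Δ Γ a b A}
    (ch : Relation.ReflTransGen (fun x y => Rel τ σ f g Δ Γ x y A) a b)
    (hv : IsVal a) : IsVal b := by
  induction ch with
  | refl => exact hv
  | tail hc hstep ih => exact (hstep.val hfv hgv).1 ih

theorem rtg_pres {r : Tm → Tm → Prop} {P : Tm → Prop} {a b : Tm}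
    (hpres : ∀ x y, P x → r x y → P y) (hab : Relation.ReflTransGen r a b)
    (hP : P a) : P b := by
  induction hab with
  | refl => exact hP
  | tail hc hstep ih => exact hpres _ _ ih hstep

theorem rtg_lift {r r' : Tm → Tm → Prop} (F : Tm → Tm) {P : Tm → Prop} {a b : Tm}
    (hP : P a) (hpres : ∀ x y, P x → r x y → P y)
    (hmap : ∀ x y, P x → r x y → r' (F x) (F y))
    (hab : Relation.ReflTransGen r a b) :
    Relation.ReflTransGen r' (F a) (F b) := by
  induction hab with
  | refl => exact .refl
  | tail hc hstep ih => exact ih.tail (hmap _ _ (rtg_pres hpres hc hP) hstep)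

include hfv hgv hfT hgT in
theorem relStar_compatible : Compatible (RelStar τ σ f g) := by
  constructor
  case var =>
    intro Δ Γ x A hΓ hx
    exact ⟨HasTy.var hΓ hx, .refl⟩
  case unit =>
    intro Δ Γ hΓ
    exact ⟨HasTy.unit hΓ, .refl⟩
  case choice =>
    intro Δ Γ hΓ
    exact ⟨HasTy.choice hΓ, .refl⟩
  case pair =>
    rintro Δ Γ v₁ v₂ v₁' v₂' A₁ A₂ hv₁ hv₂ hv₁' hv₂' ⟨ht1, ch1⟩ ⟨ht2, ch2⟩
    have ht1' := chain_wt hfT hgT ch1 ht1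
    refine ⟨HasTy.pair hv₁ hv₂ ht1 ht2,
      Relation.ReflTransGen.trans (b := Tm.pair v₁' v₂) ?_ ?_⟩
    · refine rtg_lift (fun x => Tm.pair x v₂)
        (P := fun x => IsVal x ∧ HasTy Δ Γ x A₁) ⟨hv₁, ht1⟩
        (fun x y hx hst => ⟨(hst.val hfv hgv).1 hx.1, (hst.wt hfT hgT).2⟩)
        (fun x y hx hst =>
          Rel.pair hx.1 hv₂ ((hst.val hfv hgv).1 hx.1) hv₂ hst (Rel.refl ht2)) ch1
    · refine rtg_lift (fun y => Tm.pair v₁' y)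
        (P := fun x => IsVal x ∧ HasTy Δ Γ x A₂) ⟨hv₂, ht2⟩
        (fun x y hx hst => ⟨(hst.val hfv hgv).1 hx.1, (hst.wt hfT hgT).2⟩)
        (fun x y hx hst =>
          Rel.pair hv₁' hx.1 hv₁' ((hst.val hfv hgv).1 hx.1) (Rel.refl ht1') hst) ch2
  case lam =>
    rintro Δ Γ e e' A₁ A₂ hw ⟨ht, ch⟩
    refine ⟨HasTy.lam hw ht, ?_⟩
    exact rtg_lift (fun x => Tm.lam x) (P := fun _ => True) trivial
      (fun _ _ _ _ => trivial) (fun x y _ hst => Rel.lam hw hst) ch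
  case inj =>
    rintro Δ Γ v v' m ts j hj hv hv' hw ⟨ht, ch⟩
    refine ⟨HasTy.inj hj hv hw ht, ?_⟩
    exact rtg_lift (fun x => Tm.inj j x) (P := fun x => IsVal x) hv
      (fun x y hx hst => (hst.val hfv hgv).1 hx)
      (fun x y hx hst => Rel.inj hj hx ((hst.val hfv hgv).1 hx) hw hst) ch
  case tlam =>
    rintro Δ Γ e e' A ⟨ht, ch⟩
    refine ⟨HasTy.tlam ht, ?_⟩
    exact rtg_lift (fun x => Tm.tlam x) (P := fun _ => True) trivial
      (fun _ _ _ _ => trivial) (fun x y _ hst => Rel.tlam hst) ch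
  case proj =>
    rintro Δ Γ v v' A₁ A₂ b hv hv' ⟨ht, ch⟩
    refine ⟨HasTy.proj b hv ht, ?_⟩
    exact rtg_lift (fun x => Tm.proj b x) (P := fun x => IsVal x) hv
      (fun x y hx hst => (hst.val hfv hgv).1 hx)
      (fun x y hx hst => Rel.proj b hx ((hst.val hfv hgv).1 hx) hst) ch
  case app =>
    rintro Δ Γ v v' e e' A₁ A₂ hv hv' ⟨htv, chv⟩ ⟨hte, che⟩
    have htv' := chain_wt hfT hgT chv htv
    refine ⟨HasTy.app hv htv hte,
      Relation.ReflTransGen.trans (b := Tm.app v' e) ?_ ?_⟩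
    · refine rtg_lift (fun x => Tm.app x e)
        (P := fun x => IsVal x ∧ HasTy Δ Γ x (.arrow A₁ A₂)) ⟨hv, htv⟩
        (fun x y hx hst => ⟨(hst.val hfv hgv).1 hx.1, (hst.wt hfT hgT).2⟩)
        (fun x y hx hst =>
          Rel.app hx.1 ((hst.val hfv hgv).1 hx.1) hst (Rel.refl hte)) chv
    · refine rtg_lift (fun y => Tm.app v' y) (P := fun _ => True) trivial
        (fun _ _ _ _ => trivial)
        (fun x y _ hst => Rel.app hv' hv' (Rel.refl htv') hst) che
  case tapp =>
    rintro Δ Γ v v' A B hv hv' ⟨ht, ch⟩ hwB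
    refine ⟨HasTy.tapp hv ht hwB, ?_⟩
    exact rtg_lift (fun x => Tm.tapp x B) (P := fun x => IsVal x) hv
      (fun x y hx hst => (hst.val hfv hgv).1 hx)
      (fun x y hx hst => Rel.tapp hx ((hst.val hfv hgv).1 hx) hst hwB) ch
  case case =>
    rintro Δ Γ v v' A' m ts es es' hv hv' ⟨htv, chv⟩ hbr
    have htv' := chain_wt hfT hgT chv htv
    have hv'' : IsVal v' := hv'
    refine ⟨HasTy.case hv htv (fun j => (hbr j).1),
      Relation.ReflTransGen.trans (b := Tm.case v' m es) ?_ ?_⟩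
    · -- flip the scrutinee
      refine rtg_lift (fun x => Tm.case x m es)
        (P := fun x => IsVal x ∧ HasTy Δ Γ x (.mu m ts)) ⟨hv, htv⟩
        (fun x y hx hst => ⟨(hst.val hfv hgv).1 hx.1, (hst.wt hfT hgT).2⟩)
        (fun x y hx hst =>
          Rel.case hx.1 ((hst.val hfv hgv).1 hx.1) hst
            (fun j => Rel.refl (hbr j).1)) chv
    · -- flip the branches one at a time
      have htmix : ∀ (k : ℕ) (j : Fin m),
          HasTy Δ (Ty.subst1 (.mu m ts) (ts j) :: Γ)
            (if (j : ℕ) < k then es' j else es j) A' := by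
        intro k j
        by_cases hjk : (j : ℕ) < k
        · rw [if_pos hjk]
          exact chain_wt hfT hgT (hbr j).2 (hbr j).1
        · rw [if_neg hjk]
          exact (hbr j).1
      have aux : ∀ k : ℕ,
          Relation.ReflTransGen (fun x y => Rel τ σ f g Δ Γ x y A')
            (Tm.case v' m es)
            (Tm.case v' m (fun j => if (j : ℕ) < k then es' j else es j)) := by
        intro k
        induction k with
        | zero =>
            have : (fun j : Fin m => if (j : ℕ) < 0 then es' j else es j) = es := by
              funext j; rw [if_neg (Nat.not_lt_zero _)]
            rw [this]
        | succ k ih =>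
            by_cases hk : k < m
            · set K : Fin m := ⟨k, hk⟩ with hK
              have step : Relation.ReflTransGen (fun x y => Rel τ σ f g Δ Γ x y A')
                  (Tm.case v' m (fun j => if j = K then es K else
                    (if (j : ℕ) < k then es' j else es j)))
                  (Tm.case v' m (fun j => if j = K then es' K else
                    (if (j : ℕ) < k then es' j else es j))) := by
                refine rtg_lift
                  (fun t => Tm.case v' m (fun j => if j = K then t else
                    (if (j : ℕ) < k then es' j else es j)))
                  (P := fun x => HasTy Δ (Ty.subst1 (.mu m ts) (ts K) :: Γ) x A')
                  (hbr K).1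
                  (fun x y hx hst => (hst.wt hfT hgT).2)
                  (fun x y hx hst => ?_) (hbr K).2
                refine Rel.case hv'' hv'' (Rel.refl htv') (fun j => ?_)
                by_cases hj : j = K
                · subst hj
                  rw [if_pos rfl, if_pos rfl]
                  exact hst
                · rw [if_neg hj, if_neg hj]
                  exact Rel.refl (htmix k j)
              have e1 : (fun j : Fin m => if j = K then es K else
                  (if (j : ℕ) < k then es' j else es j)) =
                  (fun j : Fin m => if (j : ℕ) < k then es' j else es j) := by
                funext j
                by_cases hj : j = K
                · subst hj
                  rw [if_pos rfl, if_neg (Nat.lt_irrefl k : ¬ ((⟨k, hk⟩ : Fin m) : ℕ) < k)]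
                · rw [if_neg hj]
              have e2 : (fun j : Fin m => if j = K then es' K else
                  (if (j : ℕ) < k then es' j else es j)) =
                  (fun j : Fin m => if (j : ℕ) < k + 1 then es' j else es j) := by
                funext j
                by_cases hj : j = K
                · subst hj
                  rw [if_pos rfl, if_pos (Nat.lt_succ_self k : ((⟨k, hk⟩ : Fin m) : ℕ) < k + 1)]
                · have hjk : (j : ℕ) ≠ k := by
                    intro hc
                    exact hj (Fin.ext hc)
                  rw [if_neg hj]
                  by_cases hlt : (j : ℕ) < k
                  · rw [if_pos hlt, if_pos (by omega)]
                  · rw [if_neg hlt, if_neg (by omega)]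
              rw [e1, e2] at step
              exact ih.trans step
            · have : (fun j : Fin m => if (j : ℕ) < k + 1 then es' j else es j) =
                  (fun j : Fin m => if (j : ℕ) < k then es' j else es j) := by
                funext j
                have hjm : (j : ℕ) < m := j.isLt
                rw [if_pos (by omega), if_pos (by omega)]
              rw [this]
              exact ih
      have : (fun j : Fin m => if (j : ℕ) < m then es' j else es j) = es' := by
        funext j
        rw [if_pos j.isLt]
      have h2 := aux m
      rw [this] at h2
      exact h2

include hτ0 hσ0 hfv hgv hfT hgT in
theorem relStar_props
    (h : ∀ u, IsVal u → HasTy 0 [] u τ →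
      CtxMayEq 0 [] (.app f u) (.app g u) σ) :
    WellTypedRel (RelStar τ σ f g) ∧ ReflRel (RelStar τ σ f g) ∧
    TransRel (RelStar τ σ f g) ∧ Compatible (RelStar τ σ f g) ∧
    MayAdequate (RelStar τ σ f g) := by
  refine ⟨?_, ?_, ?_, relStar_compatible hfv hgv hfT hgT, ?_⟩
  · rintro Δ Γ a b A ⟨ht, ch⟩
    exact ⟨ht, chain_wt hfT hgT ch ht⟩
  · intro Δ Γ a A ht
    exact ⟨ht, .refl⟩
  · rintro Δ Γ a b c A ⟨ht1, ch1⟩ ⟨ht2, ch2⟩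
    exact ⟨ht1, ch1.trans ch2⟩
  · rintro a b A ⟨ht, ch⟩ hconv
    induction ch with
    | refl => exact hconv
    | tail hc hstep ih =>
        exact rel_mayconv hτ0 hσ0 hfv hgv hfT hgT h hstep ih

end Star

end CountChoice


namespace CountChoice

/-- **Functional extensionality for values (may)** (Lemma 4.13): if `f` and
`g` are closed values of type `τ→σ` such that `f u ≅↓ctx g u : σ` for every
closed value `u` of type `τ`, then `f ≅↓ctx g : τ→σ`. -/
theorem fun_extensionality_may (τ σ : Ty) (hτ : Ty.Wf 0 τ) (hσ : Ty.Wf 0 σ)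
    (f g : Tm) (hf : IsVal f) (hg : IsVal g)
    (hfT : HasTy 0 [] f (.arrow τ σ)) (hgT : HasTy 0 [] g (.arrow τ σ))
    (h : ∀ u, IsVal u → HasTy 0 [] u τ → CtxMayEq 0 [] (.app f u) (.app g u) σ) :
    CtxMayEq 0 [] f g (.arrow τ σ) := by
  rcases relStar_props hτ hσ hf hg hfT hgT h with ⟨hwt, hrefl, htrans, hcomp, hadeq⟩
  constructor
  · exact ⟨RelStar τ σ f g, hwt, hrefl, htrans, hcomp, hadeq,
      hfT, Relation.ReflTransGen.single (Rel.baseFG CtxWf.nil)⟩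
  · exact ⟨RelStar τ σ f g, hwt, hrefl, htrans, hcomp, hadeq,
      hgT, Relation.ReflTransGen.single (Rel.baseGF CtxWf.nil)⟩

end CountChoice
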